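/- arXiv:2207.09921 — 4 statements merged into one kernel-verified Lean document; each statement's English description precedes it below -/
import Mathlib

section
/- Let σ1, σ2 > 0 and ρ ∈ (−1,1). Then E[|X1|·X2²] − E[|X1|]·E[X2²] ≥ √2 · σ1 σ2² ρ² / √π. -/
open MeasureTheory Real

/-- Centered bivariate Gaussian density with variances σ₁², σ₂² and correlation ρ. -/
noncomputable def gaussDensity2 (σ₁ σ₂ ρ x y : ℝ) : ℝ :=
  (2 * π * σ₁ * σ₂ * Real.sqrt (1 - ρ ^ 2))⁻¹ *
    Real.exp (-(x ^ 2 / σ₁ ^ 2 - 2 * ρ * x * y / (σ₁ * σ₂) + y ^ 2 / σ₂ ^ 2) /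
      (2 * (1 - ρ ^ 2)))

/-- E[|X₁|^a |X₂|^b] for the centered bivariate Gaussian. -/
noncomputable def E2 (σ₁ σ₂ ρ a b : ℝ) : ℝ :=
  ∫ q : ℝ × ℝ, |q.1| ^ a * |q.2| ^ b * gaussDensity2 σ₁ σ₂ ρ q.1 q.2

/-- E[|X|^a] for a centered Gaussian with variance σ². -/
noncomputable def E1 (σ a : ℝ) : ℝ :=
  ∫ x : ℝ, |x| ^ a * (Real.sqrt (2 * π * σ ^ 2))⁻¹ * Real.exp (-x ^ 2 / (2 * σ ^ 2))

section GPIAuxSection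

open Filter Set Topology


variable {b : ℝ}

lemma hexp (b x : ℝ) : HasDerivAt (fun y : ℝ => Real.exp (-b * y ^ 2))
    (-2 * b * x * Real.exp (-b * x ^ 2)) x := by
  have h1 : HasDerivAt (fun y : ℝ => -b * y ^ 2) (-b * (2 * x)) x := by
    simpa using (hasDerivAt_pow 2 x).const_mul (-b)
  convert h1.exp using 1
  ring

lemma tendsto_sq_mul (hb : 0 < b) (c d : ℝ) :
    Tendsto (fun x : ℝ => (c * x ^ 2 + d) * Real.exp (-b * x ^ 2)) atTop (𝓝 0) := by
  have h2 : Tendsto (fun x : ℝ => x ^ 2) atTop atTop :=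
    tendsto_pow_atTop two_ne_zero
  have h1 : Tendsto (fun x : ℝ => x ^ 2 * Real.exp (-b * x ^ 2)) atTop (𝓝 0) := by
    have := (tendsto_rpow_mul_exp_neg_mul_atTop_nhds_zero 1 b hb).comp h2
    simpa [Function.comp_def, neg_sq] using this
  have h0 : Tendsto (fun x : ℝ => Real.exp (-b * x ^ 2)) atTop (𝓝 0) := by
    rw [Real.tendsto_exp_comp_nhds_zero]
    exact Tendsto.const_mul_atTop_of_neg (by linarith) h2
  have h := (h1.const_mul c).add (h0.const_mul d)
  have heq : (fun x : ℝ => (c * x ^ 2 + d) * Real.exp (-b * x ^ 2)) =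
      fun x => c * (x ^ 2 * Real.exp (-b * x ^ 2)) + d * Real.exp (-b * x ^ 2) := by
    funext x; ring
  rw [heq]
  simpa using h

lemma tendsto_sq_mul_bot (hb : 0 < b) (c d : ℝ) :
    Tendsto (fun x : ℝ => (c * x ^ 2 + d) * Real.exp (-b * x ^ 2)) atBot (𝓝 0) := by
  have := (tendsto_sq_mul hb c d).comp tendsto_neg_atBot_atTop
  simpa [Function.comp_def, neg_sq] using this

lemma tendsto_id_mul (hb : 0 < b) :
    Tendsto (fun x : ℝ => x * Real.exp (-b * x ^ 2)) atTop (𝓝 0) := by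
  refine tendsto_of_tendsto_of_tendsto_of_le_of_le' tendsto_const_nhds
    (tendsto_sq_mul hb 1 1) ?_ ?_
  · filter_upwards [eventually_ge_atTop (0 : ℝ)] with x hx
    positivity
  · filter_upwards [eventually_ge_atTop (0 : ℝ)] with x hx
    have : x ≤ 1 * x ^ 2 + 1 := by nlinarith
    exact mul_le_mul_of_nonneg_right this (Real.exp_pos _).le

lemma tendsto_id_mul_bot (hb : 0 < b) :
    Tendsto (fun x : ℝ => x * Real.exp (-b * x ^ 2)) atBot (𝓝 0) := by
  have := ((tendsto_id_mul hb).comp tendsto_neg_atBot_atTop).neg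
  simpa [Function.comp_def, neg_sq] using this


variable {b : ℝ}

lemma int_exp (hb : 0 < b) : Integrable fun x : ℝ => Real.exp (-b * x ^ 2) :=
  integrable_exp_neg_mul_sq hb

lemma int_abs (hb : 0 < b) : Integrable fun x : ℝ => |x| * Real.exp (-b * x ^ 2) := by
  refine (integrable_mul_exp_neg_mul_sq hb).abs.congr (ae_of_all _ fun x => ?_)
  simp [abs_mul, abs_of_pos (Real.exp_pos _)]

lemma int_sq (hb : 0 < b) : Integrable fun x : ℝ => x ^ 2 * Real.exp (-b * x ^ 2) := by
  refine (integrable_rpow_mul_exp_neg_mul_sq hb (s := 2) (by norm_num)).congr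
    (ae_of_all _ fun x => ?_)
  simp only []
  rw [show ((2 : ℝ)) = ((2 : ℕ) : ℝ) by norm_num, Real.rpow_natCast]

lemma int_cube_abs (hb : 0 < b) :
    Integrable fun x : ℝ => |x| ^ 3 * Real.exp (-b * x ^ 2) := by
  refine (integrable_rpow_mul_exp_neg_mul_sq hb (s := 3) (by norm_num)).abs.congr
    (ae_of_all _ fun x => ?_)
  simp only []
  rw [show ((3 : ℝ)) = ((3 : ℕ) : ℝ) by norm_num, Real.rpow_natCast, abs_mul, abs_pow,
    abs_of_pos (Real.exp_pos _)]

lemma int_id_abs (hb : 0 < b) :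
    Integrable fun x : ℝ => x * |x| * Real.exp (-b * x ^ 2) := by
  refine (int_sq hb).mono' ?_ (ae_of_all _ fun x => ?_)
  · exact ((continuous_id.mul continuous_abs).mul
      (by continuity : Continuous fun x : ℝ => Real.exp (-b * x ^ 2))).aestronglyMeasurable
  · rw [Real.norm_eq_abs, abs_mul, abs_mul, abs_abs, abs_of_pos (Real.exp_pos _)]
    have : |x| * |x| = x ^ 2 := by rw [← abs_mul, ← sq, abs_sq]
    rw [this]

lemma integral_id_exp (hb : 0 < b) : ∫ x : ℝ, x * Real.exp (-b * x ^ 2) = 0 := by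
  have h := MeasureTheory.integral_neg_eq_self (fun x : ℝ => x * Real.exp (-b * x ^ 2))
    (volume : Measure ℝ)
  simp only [neg_sq] at h
  have h2 : ∫ x : ℝ, -x * Real.exp (-b * x ^ 2) =
      -∫ x : ℝ, x * Real.exp (-b * x ^ 2) := by
    rw [← integral_neg]
    congr 1
    funext x
    ring
  rw [h2] at h
  linarith

lemma integral_Ioi_id (hb : 0 < b) :
    ∫ x in Ioi (0 : ℝ), x * Real.exp (-b * x ^ 2) = 1 / (2 * b) := by
  have hd : ∀ x ∈ Ici (0 : ℝ),
      HasDerivAt (fun y : ℝ => -(2 * b)⁻¹ * Real.exp (-b * y ^ 2))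
        (x * Real.exp (-b * x ^ 2)) x := by
    intro x _
    have := (hexp b x).const_mul (-(2 * b)⁻¹)
    refine this.congr_deriv ?_
    field_simp
  have ht : Tendsto (fun y : ℝ => -(2 * b)⁻¹ * Real.exp (-b * y ^ 2)) atTop (𝓝 0) := by
    have := tendsto_sq_mul hb 0 (-(2 * b)⁻¹)
    exact this.congr fun x => by ring
  have h := integral_Ioi_of_hasDerivAt_of_tendsto' hd
    ((integrable_mul_exp_neg_mul_sq hb).integrableOn) ht
  rw [h]
  norm_num

lemma integral_abs_exp (hb : 0 < b) :
    ∫ x : ℝ, |x| * Real.exp (-b * x ^ 2) = 1 / b := by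
  have h : (fun x : ℝ => |x| * Real.exp (-b * x ^ 2)) =
      fun x : ℝ => |x| * Real.exp (-b * |x| ^ 2) := by
    funext x; rw [sq_abs]
  rw [h, integral_comp_abs (f := fun t : ℝ => t * Real.exp (-b * t ^ 2)), integral_Ioi_id hb]
  field_simp

lemma integral_cube_abs_exp (hb : 0 < b) :
    ∫ x : ℝ, |x| ^ 3 * Real.exp (-b * x ^ 2) = 1 / b ^ 2 := by
  have hIoi : ∫ x in Ioi (0 : ℝ), x ^ 3 * Real.exp (-b * x ^ 2) = 1 / (2 * b ^ 2) := by
    have hd : ∀ x ∈ Ici (0 : ℝ),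
        HasDerivAt (fun y : ℝ => -(2 * b ^ 2)⁻¹ * ((b * y ^ 2 + 1) * Real.exp (-b * y ^ 2)))
          (x ^ 3 * Real.exp (-b * x ^ 2)) x := by
      intro x _
      have hpoly : HasDerivAt (fun y : ℝ => b * y ^ 2 + 1) (b * (2 * x)) x := by
        simpa using ((hasDerivAt_pow 2 x).const_mul b).add_const 1
      have := (hpoly.mul (hexp b x)).const_mul (-(2 * b ^ 2)⁻¹)
      refine this.congr_deriv ?_
      field_simp
      ring
    have ht : Tendsto
        (fun y : ℝ => -(2 * b ^ 2)⁻¹ * ((b * y ^ 2 + 1) * Real.exp (-b * y ^ 2)))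
        atTop (𝓝 0) := by
      have := tendsto_sq_mul hb (-(2 * b ^ 2)⁻¹ * b) (-(2 * b ^ 2)⁻¹)
      exact this.congr fun x => by ring
    have hint : IntegrableOn (fun x : ℝ => x ^ 3 * Real.exp (-b * x ^ 2)) (Ioi 0) := by
      refine ((int_cube_abs hb).integrableOn).congr_fun (fun x hx => ?_) measurableSet_Ioi
      show |x| ^ 3 * _ = _
      rw [abs_of_pos (show (0:ℝ) < x from hx)]
    have h := integral_Ioi_of_hasDerivAt_of_tendsto' hd hint ht
    rw [h]
    norm_num
  have h : (fun x : ℝ => |x| ^ 3 * Real.exp (-b * x ^ 2)) =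
      fun x : ℝ => |x| ^ 3 * Real.exp (-b * |x| ^ 2) := by
    funext x; rw [sq_abs]
  rw [h, integral_comp_abs (f := fun t : ℝ => t ^ 3 * Real.exp (-b * t ^ 2)), hIoi]
  field_simp

lemma integral_sq_exp (hb : 0 < b) :
    ∫ x : ℝ, x ^ 2 * Real.exp (-b * x ^ 2) = Real.sqrt (π / b) / (2 * b) := by
  have hIoi : ∫ x in Ioi (0 : ℝ),
      (Real.exp (-b * x ^ 2) - 2 * b * (x ^ 2 * Real.exp (-b * x ^ 2))) = 0 := by
    have hd : ∀ x ∈ Ici (0 : ℝ),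
        HasDerivAt (fun y : ℝ => y * Real.exp (-b * y ^ 2))
          (Real.exp (-b * x ^ 2) - 2 * b * (x ^ 2 * Real.exp (-b * x ^ 2))) x := by
      intro x _
      have := (hasDerivAt_id x).mul (hexp b x)
      refine this.congr_deriv ?_
      simp only [id_eq]
      ring
    have ht : Tendsto (fun y : ℝ => y * Real.exp (-b * y ^ 2)) atTop (𝓝 0) :=
      tendsto_id_mul hb
    have hint : IntegrableOn
        (fun x : ℝ => Real.exp (-b * x ^ 2) - 2 * b * (x ^ 2 * Real.exp (-b * x ^ 2)))
        (Ioi 0) := ((int_exp hb).sub ((int_sq hb).const_mul (2 * b))).integrableOn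
    have h := integral_Ioi_of_hasDerivAt_of_tendsto' hd hint ht
    rw [h]
    simp
  have heven : (fun x : ℝ =>
      Real.exp (-b * x ^ 2) - 2 * b * (x ^ 2 * Real.exp (-b * x ^ 2))) =
      fun x : ℝ => Real.exp (-b * |x| ^ 2) - 2 * b * (|x| ^ 2 * Real.exp (-b * |x| ^ 2)) := by
    funext x; rw [sq_abs]
  have htot : ∫ x : ℝ,
      (Real.exp (-b * x ^ 2) - 2 * b * (x ^ 2 * Real.exp (-b * x ^ 2))) = 0 := by
    rw [heven, integral_comp_abs
      (f := fun t : ℝ => Real.exp (-b * t ^ 2) - 2 * b * (t ^ 2 * Real.exp (-b * t ^ 2)))]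
    rw [hIoi]
    ring
  rw [integral_sub (int_exp hb) ((int_sq hb).const_mul (2 * b)), integral_const_mul,
    integral_gaussian] at htot
  have hb' : (2 * b) ≠ 0 := by positivity
  field_simp at htot ⊢
  linarith


lemma sqrt_two_pi_sq {σ : ℝ} (hσ : 0 < σ) :
    Real.sqrt (2 * π * σ ^ 2) = Real.sqrt 2 * Real.sqrt π * σ := by
  rw [show 2 * π * σ ^ 2 = (Real.sqrt 2 * Real.sqrt π * σ) ^ 2 by
    rw [mul_pow, mul_pow, sq_sqrt (by norm_num : (0:ℝ) ≤ 2), sq_sqrt pi_pos.le]]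
  exact Real.sqrt_sq (by positivity)

lemma E1_one {σ : ℝ} (hσ : 0 < σ) : E1 σ 1 = Real.sqrt 2 * σ / Real.sqrt π := by
  have hb : 0 < (2 * σ ^ 2)⁻¹ := by positivity
  have hrw : (fun x : ℝ => |x| ^ (1:ℝ) * (Real.sqrt (2 * π * σ ^ 2))⁻¹ *
      Real.exp (-x ^ 2 / (2 * σ ^ 2))) =
      fun x : ℝ => (Real.sqrt (2 * π * σ ^ 2))⁻¹ *
        (|x| * Real.exp (-(2 * σ ^ 2)⁻¹ * x ^ 2)) := by
    funext x
    rw [Real.rpow_one, show -x ^ 2 / (2 * σ ^ 2) = -(2 * σ ^ 2)⁻¹ * x ^ 2 by ring]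
    ring
  rw [E1, hrw, integral_const_mul, integral_abs_exp hb, sqrt_two_pi_sq hσ]
  have h2 : Real.sqrt 2 ^ 2 = 2 := sq_sqrt (by norm_num)
  have hp : (0:ℝ) < Real.sqrt π := Real.sqrt_pos.mpr pi_pos
  have h2p : (0:ℝ) < Real.sqrt 2 := by norm_num [Real.sqrt_pos]
  field_simp
  linear_combination (-1) * h2

lemma E1_two {σ : ℝ} (hσ : 0 < σ) : E1 σ 2 = σ ^ 2 := by
  have hb : 0 < (2 * σ ^ 2)⁻¹ := by positivity
  have hrw : (fun x : ℝ => |x| ^ (2:ℝ) * (Real.sqrt (2 * π * σ ^ 2))⁻¹ *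
      Real.exp (-x ^ 2 / (2 * σ ^ 2))) =
      fun x : ℝ => (Real.sqrt (2 * π * σ ^ 2))⁻¹ *
        (x ^ 2 * Real.exp (-(2 * σ ^ 2)⁻¹ * x ^ 2)) := by
    funext x
    rw [show -x ^ 2 / (2 * σ ^ 2) = -(2 * σ ^ 2)⁻¹ * x ^ 2 by ring,
      show ((2:ℝ)) = ((2:ℕ) : ℝ) by norm_num, Real.rpow_natCast, sq_abs]
    ring
  rw [E1, hrw, integral_const_mul, integral_sq_exp hb]
  have hd : π / (2 * σ ^ 2)⁻¹ = 2 * π * σ ^ 2 := by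
    field_simp
  rw [hd, sqrt_two_pi_sq hσ]
  have hp : (0:ℝ) < Real.sqrt π := Real.sqrt_pos.mpr pi_pos
  have h2p : (0:ℝ) < Real.sqrt 2 := by norm_num [Real.sqrt_pos]
  field_simp

def shearEquiv (c : ℝ) : ℝ × ℝ ≃ᵐ ℝ × ℝ where
  toEquiv :=
  { toFun := fun p => (p.1, p.2 + c * p.1)
    invFun := fun p => (p.1, p.2 - c * p.1)
    left_inv := fun p => by simp
    right_inv := fun p => by simp }
  measurable_toFun := measurable_fst.prodMk (measurable_snd.add (measurable_fst.const_mul c))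
  measurable_invFun := measurable_fst.prodMk (measurable_snd.sub (measurable_fst.const_mul c))

lemma shear_mp (c : ℝ) :
    MeasurePreserving (shearEquiv c) (volume : Measure (ℝ × ℝ)) volume := by
  have h := MeasurePreserving.skew_product (μa := (volume : Measure ℝ))
    (μb := (volume : Measure ℝ)) (μc := (volume : Measure ℝ)) (μd := (volume : Measure ℝ))
    (MeasurePreserving.id _) (g := fun x y => y + c * x)
    (measurable_snd.add (measurable_fst.const_mul c))
    (Filter.Eventually.of_forall fun x => (measurePreserving_add_right volume (c * x)).map_eq)
  refine ⟨(shearEquiv c).measurable, ?_⟩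
  rw [Measure.volume_eq_prod]
  exact h.map_eq

lemma E2_val (σ₁ σ₂ ρ : ℝ) (hσ₁ : 0 < σ₁) (hσ₂ : 0 < σ₂)
    (hρ1 : -1 < ρ) (hρ2 : ρ < 1) :
    E2 σ₁ σ₂ ρ 1 2 = Real.sqrt 2 * σ₁ * σ₂ ^ 2 * (1 + ρ ^ 2) / Real.sqrt π := by
  have hρ : 0 < 1 - ρ ^ 2 := by nlinarith
  set τ := Real.sqrt (1 - ρ ^ 2) with hτdef
  have hτpos : 0 < τ := Real.sqrt_pos.mpr hρ
  have hτ : τ ^ 2 = 1 - ρ ^ 2 := sq_sqrt hρ.le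
  set b1 : ℝ := (2 * σ₁ ^ 2)⁻¹ with hb1def
  set b2 : ℝ := (2 * (σ₂ ^ 2 * (1 - ρ ^ 2)))⁻¹ with hb2def
  set m : ℝ := ρ * σ₂ / σ₁ with hmdef
  set C : ℝ := (2 * π * σ₁ * σ₂ * τ)⁻¹ with hCdef
  have hb1 : 0 < b1 := by positivity
  have hb2 : 0 < b2 := by positivity
  -- density factorization
  have hdens : ∀ x y : ℝ, gaussDensity2 σ₁ σ₂ ρ x y =
      C * (Real.exp (-b1 * x ^ 2) * Real.exp (-b2 * (y - m * x) ^ 2)) := by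
    intro x y
    rw [gaussDensity2, ← Real.exp_add]
    congr 1
    rw [hb1def, hb2def, hmdef]
    field_simp
    ring
  -- rewrite the integrand
  have hrw : (fun q : ℝ × ℝ => |q.1| ^ (1:ℝ) * |q.2| ^ (2:ℝ) * gaussDensity2 σ₁ σ₂ ρ q.1 q.2) =
      fun q : ℝ × ℝ => C * ((|q.1| * Real.exp (-b1 * q.1 ^ 2)) *
        (q.2 ^ 2 * Real.exp (-b2 * (q.2 - m * q.1) ^ 2))) := by
    funext q
    rw [hdens, Real.rpow_one,
      show ((2:ℝ)) = ((2:ℕ) : ℝ) by norm_num, Real.rpow_natCast, sq_abs]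
    ring
  rw [E2, hrw]
  -- shear change of variables
  have hshear := (shear_mp m).integral_comp' (fun q : ℝ × ℝ =>
    C * ((|q.1| * Real.exp (-b1 * q.1 ^ 2)) *
      (q.2 ^ 2 * Real.exp (-b2 * (q.2 - m * q.1) ^ 2))))
  rw [← hshear]
  have hfT : (fun p : ℝ × ℝ => C * ((|(shearEquiv m p).1| *
      Real.exp (-b1 * (shearEquiv m p).1 ^ 2)) *
      ((shearEquiv m p).2 ^ 2 * Real.exp (-b2 * ((shearEquiv m p).2 -
        m * (shearEquiv m p).1) ^ 2)))) =
      fun p : ℝ × ℝ => C * ((|p.1| * Real.exp (-b1 * p.1 ^ 2)) *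
        (p.2 ^ 2 * Real.exp (-b2 * p.2 ^ 2))
        + (2 * m) * ((p.1 * |p.1| * Real.exp (-b1 * p.1 ^ 2)) *
          (p.2 * Real.exp (-b2 * p.2 ^ 2)))
        + m ^ 2 * ((|p.1| ^ 3 * Real.exp (-b1 * p.1 ^ 2)) *
          Real.exp (-b2 * p.2 ^ 2))) := by
    funext p
    show C * ((|p.1| * Real.exp (-b1 * p.1 ^ 2)) *
      ((p.2 + m * p.1) ^ 2 * Real.exp (-b2 * (p.2 + m * p.1 - m * p.1) ^ 2))) = _
    rw [show p.2 + m * p.1 - m * p.1 = p.2 by ring]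
    have habs : |p.1| ^ 3 = p.1 ^ 2 * |p.1| := by
      rw [pow_succ, sq_abs]
    rw [habs]
    ring
  rw [hfT, Measure.volume_eq_prod, integral_const_mul]
  have iA : Integrable (fun p : ℝ × ℝ => (|p.1| * Real.exp (-b1 * p.1 ^ 2)) *
      (p.2 ^ 2 * Real.exp (-b2 * p.2 ^ 2)))
      ((volume : Measure ℝ).prod volume) := (int_abs hb1).mul_prod (int_sq hb2)
  have iB : Integrable (fun p : ℝ × ℝ => (2 * m) * ((p.1 * |p.1| * Real.exp (-b1 * p.1 ^ 2)) *
      (p.2 * Real.exp (-b2 * p.2 ^ 2))))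
      ((volume : Measure ℝ).prod volume) :=
    ((int_id_abs hb1).mul_prod (integrable_mul_exp_neg_mul_sq hb2)).const_mul (2 * m)
  have iC : Integrable (fun p : ℝ × ℝ => m ^ 2 * ((|p.1| ^ 3 * Real.exp (-b1 * p.1 ^ 2)) *
      Real.exp (-b2 * p.2 ^ 2)))
      ((volume : Measure ℝ).prod volume) :=
    ((int_cube_abs hb1).mul_prod (int_exp hb2)).const_mul (m ^ 2)
  have iAB : Integrable (fun p : ℝ × ℝ =>
      (|p.1| * Real.exp (-b1 * p.1 ^ 2)) * (p.2 ^ 2 * Real.exp (-b2 * p.2 ^ 2))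
      + (2 * m) * ((p.1 * |p.1| * Real.exp (-b1 * p.1 ^ 2)) *
        (p.2 * Real.exp (-b2 * p.2 ^ 2))))
      ((volume : Measure ℝ).prod volume) := iA.add iB
  have hI1 : (∫ a : ℝ × ℝ, (|a.1| * Real.exp (-b1 * a.1 ^ 2)) *
      (a.2 ^ 2 * Real.exp (-b2 * a.2 ^ 2)) ∂((volume : Measure ℝ).prod volume)) =
      (1 / b1) * (Real.sqrt (π / b2) / (2 * b2)) := by
    rw [integral_prod_mul (f := fun x : ℝ => |x| * Real.exp (-b1 * x ^ 2))
      (g := fun y : ℝ => y ^ 2 * Real.exp (-b2 * y ^ 2)),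
      integral_abs_exp hb1, integral_sq_exp hb2]
  have hI2 : (∫ a : ℝ × ℝ, (a.1 * |a.1| * Real.exp (-b1 * a.1 ^ 2)) *
      (a.2 * Real.exp (-b2 * a.2 ^ 2)) ∂((volume : Measure ℝ).prod volume)) = 0 := by
    rw [integral_prod_mul (f := fun x : ℝ => x * |x| * Real.exp (-b1 * x ^ 2))
      (g := fun y : ℝ => y * Real.exp (-b2 * y ^ 2)),
      integral_id_exp hb2, mul_zero]
  have hI3 : (∫ a : ℝ × ℝ, (|a.1| ^ 3 * Real.exp (-b1 * a.1 ^ 2)) *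
      Real.exp (-b2 * a.2 ^ 2) ∂((volume : Measure ℝ).prod volume)) =
      (1 / b1 ^ 2) * Real.sqrt (π / b2) := by
    rw [integral_prod_mul (f := fun x : ℝ => |x| ^ 3 * Real.exp (-b1 * x ^ 2))
      (g := fun y : ℝ => Real.exp (-b2 * y ^ 2)),
      integral_cube_abs_exp hb1, integral_gaussian b2]
  rw [integral_add iAB iC, integral_add iA iB, integral_const_mul, integral_const_mul,
    hI1, hI2, hI3]
  have hS : Real.sqrt (π / b2) = Real.sqrt 2 * Real.sqrt π * (σ₂ * τ) := by
    rw [show π / b2 = (Real.sqrt 2 * Real.sqrt π * (σ₂ * τ)) ^ 2 by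
      rw [mul_pow, mul_pow, mul_pow, sq_sqrt (by norm_num : (0:ℝ) ≤ 2), sq_sqrt pi_pos.le,
        hτ, hb2def]
      field_simp]
    exact Real.sqrt_sq (by positivity)
  rw [hS, mul_zero, add_zero]
  have h2 : Real.sqrt 2 ^ 2 = 2 := sq_sqrt (by norm_num)
  have hppos : (0:ℝ) < Real.sqrt π := Real.sqrt_pos.mpr pi_pos
  have h2pos : (0:ℝ) < Real.sqrt 2 := by norm_num [Real.sqrt_pos]
  have hπ : π = Real.sqrt π ^ 2 := (sq_sqrt pi_pos.le).symm
  rw [hCdef, hb1def, hb2def, hmdef, hπ]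
  field_simp
  ring_nf
  rw [Real.sqrt_sq hppos.le]

end GPIAuxSection

theorem gpi_quantitative_abs_sq (σ₁ σ₂ ρ : ℝ)
    (hσ₁ : 0 < σ₁) (hσ₂ : 0 < σ₂) (hρ : ρ ∈ Set.Ioo (-1 : ℝ) 1) :
    E2 σ₁ σ₂ ρ 1 2 - E1 σ₁ 1 * E1 σ₂ 2 ≥
      Real.sqrt 2 * σ₁ * σ₂ ^ 2 * ρ ^ 2 / Real.sqrt π := by
  obtain ⟨hρ1, hρ2⟩ := hρ
  rw [E2_val σ₁ σ₂ ρ hσ₁ hσ₂ hρ1 hρ2, E1_one hσ₁, E1_two hσ₂, ge_iff_le]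
  apply le_of_eq
  have hppos : (0:ℝ) < Real.sqrt π := Real.sqrt_pos.mpr pi_pos
  field_simp
  ring
end

section
/- Let σ1, σ2 > 0, ρ ∈ (−1,1), and let m, n be even integers with m > 2 and n > 2. Then E[X1^m · X2^n] − E[X1^m]·E[X2^n] ≥ (m−1)!! (n−1)!! m n σ1^m σ2^n ρ² / 2. -/
open MeasureTheory Real

noncomputable def gpiMu : ℕ → ℝ
  | 0 => 1
  | 1 => 0
  | (k+2) => (k+1) * gpiMu k

lemma gpiMu_zero : gpiMu 0 = 1 := rfl
lemma gpiMu_one : gpiMu 1 = 0 := rfl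
lemma gpiMu_add_two (k : ℕ) : gpiMu (k+2) = (k+1) * gpiMu k := rfl

lemma gpiMu_nonneg (k : ℕ) : 0 ≤ gpiMu k := by
  induction k using Nat.strong_induction_on with
  | _ k ih =>
    match k with
    | 0 => norm_num [gpiMu]
    | 1 => norm_num [gpiMu]
    | (k+2) =>
      have h := ih k (by omega)
      rw [gpiMu_add_two]
      positivity

lemma gpiMu_odd (k : ℕ) (hk : Odd k) : gpiMu k = 0 := by
  induction k using Nat.strong_induction_on with
  | _ k ih =>
    match k with
    | 0 => simp at hk
    | 1 => rfl
    | (k+2) =>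
      obtain ⟨t, ht⟩ := hk
      have h := ih k (by omega) ⟨t-1, by omega⟩
      simp [gpiMu_add_two, h]

lemma gpiMu_fact (c : ℕ) : gpiMu (2*c) * (2^c * (c.factorial : ℝ)) = (2*c).factorial := by
  induction c with
  | zero => simp [gpiMu]
  | succ c ih =>
    have h2 : 2*(c+1) = 2*c+2 := by ring
    rw [h2, gpiMu_add_two]
    push_cast [Nat.factorial_succ, show 2*c+2 = (2*c+1)+1 by ring, Nat.factorial_succ]
    linear_combination (2*(c:ℝ)+1)*2*((c:ℝ)+1)*ih

lemma gpiMu_doubleFact (m : ℕ) (hm : Even m) :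
    gpiMu m = ((m-1).doubleFactorial : ℝ) := by
  obtain ⟨c, rfl⟩ := hm
  induction c with
  | zero => simp [gpiMu]
  | succ c ih =>
    have h2 : c+1+(c+1) = (c+c)+2 := by ring
    rw [h2, gpiMu_add_two, ih]
    rcases Nat.eq_zero_or_pos c with hc | hc
    · subst hc; simp [gpiMu, Nat.doubleFactorial]
    · have h3 : (c+c)+2-1 = (c+c-1)+2 := by omega
      rw [h3, Nat.doubleFactorial_add_two]
      push_cast
      have h4 : ((c+c-1:ℕ):ℝ)+2 = ((c:ℝ)+(c:ℝ))+1 := by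
        have : (c+c-1 : ℕ) = c+c-1 := rfl
        push_cast [Nat.cast_sub (by omega : 1 ≤ c+c)]
        ring
      rw [h4]

/-- The expansion sum: T(a,b) = Σ_j C(b,j) ρ^j s^(b-j) μ(a+j) μ(b-j). -/
noncomputable def gpiT (ρ s : ℝ) (a b : ℕ) : ℝ :=
  ∑ j ∈ Finset.range (b+1),
    (b.choose j : ℝ) * ρ^j * s^(b-j) * gpiMu (a+j) * gpiMu (b-j)

lemma gpiT_nonneg (ρ s : ℝ) (hρ : 0 ≤ ρ) (hs : 0 ≤ s) (a b : ℕ) :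
    0 ≤ gpiT ρ s a b := by
  apply Finset.sum_nonneg
  intro j _
  have h1 := gpiMu_nonneg (a+j)
  have h2 := gpiMu_nonneg (b-j)
  positivity

/-- splitting a sum over range (2B+1) into even and odd indices -/
lemma gpi_sum_split (B : ℕ) (f : ℕ → ℝ) :
    ∑ j ∈ Finset.range (2*B+1), f j
      = ∑ c ∈ Finset.range (B+1), f (2*c) + ∑ c ∈ Finset.range B, f (2*c+1) := by
  induction B with
  | zero => simp
  | succ B ih =>
    rw [show 2*(B+1)+1 = (2*B+1)+1+1 by ring, Finset.sum_range_succ, Finset.sum_range_succ,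
      ih, Finset.sum_range_succ (fun c => f (2*c)) (B+1),
      Finset.sum_range_succ (fun c => f (2*c+1)) B]
    simp only [show 2*(B+1) = 2*B+2 from by ring]
    linarith

lemma gpi_sum_split' (B : ℕ) (f : ℕ → ℝ) :
    ∑ j ∈ Finset.range (2*B+2), f j
      = ∑ c ∈ Finset.range (B+1), f (2*c) + ∑ c ∈ Finset.range (B+1), f (2*c+1) := by
  rw [show 2*B+2 = (2*B+1)+1 by ring, Finset.sum_range_succ, gpi_sum_split,
    Finset.sum_range_succ (fun c => f (2*c+1)) B]
  ring

/-- coefficient identity, even case -/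
lemma gpiK0 (B c : ℕ) (h : c ≤ B) :
    ((2*B).choose (2*c) : ℝ) * gpiMu (2*c) * gpiMu (2*B - 2*c)
      = gpiMu (2*B) * (B.choose c : ℝ) := by
  have h2 : 2*B - 2*c = 2*(B-c) := by omega
  have e1 := gpiMu_fact c
  have e2 := gpiMu_fact (B-c)
  have e3 := gpiMu_fact B
  have hch : ((2*B).choose (2*c) * (2*c).factorial * (2*B-2*c).factorial : ℝ)
      = ((2*B).factorial : ℝ) := by
    have h0 := Nat.choose_mul_factorial_mul_factorial (by omega : 2*c ≤ 2*B)
    exact_mod_cast congrArg (Nat.cast : ℕ → ℝ) h0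
  have hchB : ((B.choose c) * c.factorial * (B-c).factorial : ℝ) = (B.factorial : ℝ) := by
    exact_mod_cast congrArg (Nat.cast : ℕ → ℝ)
      (Nat.choose_mul_factorial_mul_factorial h)
  have hκ : (0:ℝ) < 2^c * (c.factorial : ℝ) * (2^(B-c) * ((B-c).factorial : ℝ)) := by
    positivity
  apply mul_right_cancel₀ (ne_of_gt hκ)
  rw [h2]
  have hpow : (2:ℝ)^c * (2:ℝ)^(B-c) = 2^B := by
    rw [← pow_add]; congr 1; omega
  calc ((2*B).choose (2*c) : ℝ) * gpiMu (2*c) * gpiMu (2*(B-c))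
        * (2^c * (c.factorial : ℝ) * (2^(B-c) * ((B-c).factorial : ℝ)))
      = ((2*B).choose (2*c) : ℝ) * (gpiMu (2*c) * (2^c * (c.factorial : ℝ)))
        * (gpiMu (2*(B-c)) * (2^(B-c) * ((B-c).factorial : ℝ))) := by ring
    _ = ((2*B).choose (2*c) : ℝ) * (2*c).factorial * (2*(B-c)).factorial := by
        rw [e1, e2]; try ring
    _ = ((2*B).factorial : ℝ) := by rw [← hch, h2]; try ring
    _ = gpiMu (2*B) * (2^B * (B.factorial : ℝ)) := e3.symm
    _ = gpiMu (2*B) * (B.choose c : ℝ)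
        * (2^c * (c.factorial : ℝ) * (2^(B-c) * ((B-c).factorial : ℝ))) := by
        rw [← hchB, ← hpow]; ring

/-- coefficient identity, odd case -/
lemma gpiK1 (B c : ℕ) (h : c ≤ B) :
    ((2*B+1).choose (2*c+1) : ℝ) * gpiMu (2*c+2) * gpiMu (2*B - 2*c)
      = (2*B+1) * gpiMu (2*B) * (B.choose c : ℝ) := by
  have h2 : 2*B - 2*c = 2*(B-c) := by omega
  have e1 := gpiMu_fact (c+1)
  have e2 := gpiMu_fact (B-c)
  have e3 := gpiMu_fact B
  have hch : ((2*B+1).choose (2*c+1) * (2*c+1).factorial * (2*B-2*c).factorial : ℝ)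
      = ((2*B+1).factorial : ℝ) := by
    have := Nat.choose_mul_factorial_mul_factorial (by omega : 2*c+1 ≤ 2*B+1)
    rw [show 2*B+1 - (2*c+1) = 2*B-2*c by omega] at this
    exact_mod_cast congrArg (Nat.cast : ℕ → ℝ) this
  have hchB : ((B.choose c) * c.factorial * (B-c).factorial : ℝ) = (B.factorial : ℝ) := by
    exact_mod_cast congrArg (Nat.cast : ℕ → ℝ)
      (Nat.choose_mul_factorial_mul_factorial h)
  -- mu(2c+2) = (2c+1)! / (2^c c!)
  have e1' : gpiMu (2*c+2) * (2^c * (c.factorial : ℝ)) * (2*((c:ℝ)+1))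
      = ((2*c+1).factorial : ℝ) * (2*((c:ℝ)+1)) := by
    have h3 : 2*(c+1) = 2*c+2 := by ring
    rw [h3] at e1
    have h4 : ((2*(c+1)).factorial : ℝ) = ((2*c+2).factorial : ℝ) := by rw [h3]
    have h5 : ((2*c+2).factorial : ℝ) = (2*(c:ℝ)+2) * ((2*c+1).factorial : ℝ) := by
      rw [show (2*c+2) = (2*c+1)+1 by ring, Nat.factorial_succ]; push_cast; ring
    have h6 : ((c+1).factorial : ℝ) = ((c:ℝ)+1) * (c.factorial : ℝ) := by
      rw [Nat.factorial_succ]; push_cast; ring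
    rw [h6] at e1
    linear_combination e1 + h5
  have e1'' : gpiMu (2*c+2) * (2^c * (c.factorial : ℝ)) = ((2*c+1).factorial : ℝ) := by
    have hne : (2*((c:ℝ)+1)) ≠ 0 := by positivity
    exact mul_right_cancel₀ hne e1'
  have hκ : (0:ℝ) < 2^c * (c.factorial : ℝ) * (2^(B-c) * ((B-c).factorial : ℝ)) := by
    positivity
  apply mul_right_cancel₀ (ne_of_gt hκ)
  have hpow : (2:ℝ)^c * (2:ℝ)^(B-c) = 2^B := by
    rw [← pow_add]; congr 1; omega
  calc ((2*B+1).choose (2*c+1) : ℝ) * gpiMu (2*c+2) * gpiMu (2*B-2*c)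
        * (2^c * (c.factorial : ℝ) * (2^(B-c) * ((B-c).factorial : ℝ)))
      = ((2*B+1).choose (2*c+1) : ℝ) * (gpiMu (2*c+2) * (2^c * (c.factorial : ℝ)))
        * (gpiMu (2*(B-c)) * (2^(B-c) * ((B-c).factorial : ℝ))) := by rw [h2]; ring
    _ = ((2*B+1).choose (2*c+1) : ℝ) * (2*c+1).factorial * (2*B-2*c).factorial := by
        rw [e1'', e2, h2]; try ring
    _ = ((2*B+1).factorial : ℝ) := hch
    _ = (2*(B:ℝ)+1) * ((2*B).factorial : ℝ) := by
        rw [show 2*B+1 = (2*B)+1 by rfl, Nat.factorial_succ]; push_cast; try ring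
    _ = (2*(B:ℝ)+1) * (gpiMu (2*B) * (2^B * (B.factorial : ℝ))) := by rw [e3]
    _ = (2*(B:ℝ)+1) * gpiMu (2*B) * (B.choose c : ℝ)
        * (2^c * (c.factorial : ℝ) * (2^(B-c) * ((B-c).factorial : ℝ))) := by
        linear_combination (-(2*(B:ℝ)+1)) * gpiMu (2*B) * ((2:ℝ)^c * (2:ℝ)^(B-c) * hchB + ((B.factorial:ℝ)) * hpow)

lemma gpiT_zero (ρ s : ℝ) (h1 : s^2 + ρ^2 = 1) (b : ℕ) : gpiT ρ s 0 b = gpiMu b := by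
  rcases Nat.even_or_odd b with hb | hb
  · obtain ⟨B, hB⟩ := hb
    have hb2 : b = 2*B := by omega
    subst hb2
    show ∑ j ∈ Finset.range (2*B+1),
      (((2*B).choose j : ℝ) * ρ^j * s^(2*B-j) * gpiMu (0+j) * gpiMu (2*B-j)) = gpiMu (2*B)
    rw [gpi_sum_split B (fun j => ((2*B).choose j : ℝ) * ρ^j * s^(2*B-j) * gpiMu (0+j) * gpiMu (2*B-j))]
    have hodd : ∑ c ∈ Finset.range B,
        (((2*B).choose (2*c+1) : ℝ) * ρ^(2*c+1) * s^(2*B-(2*c+1)) * gpiMu (0+(2*c+1)) * gpiMu (2*B-(2*c+1))) = 0 := by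
      apply Finset.sum_eq_zero
      intro c _
      rw [show 0+(2*c+1) = 2*c+1 by ring, gpiMu_odd (2*c+1) ⟨c, by ring⟩]
      ring
    rw [hodd, add_zero]
    have heven : ∀ c ∈ Finset.range (B+1),
        (((2*B).choose (2*c) : ℝ) * ρ^(2*c) * s^(2*B-(2*c)) * gpiMu (0+(2*c)) * gpiMu (2*B-(2*c)))
          = gpiMu (2*B) * ((ρ^2)^c * (s^2)^(B-c) * (B.choose c : ℝ)) := by
      intro c hc
      have hcB : c ≤ B := by simpa using Nat.lt_succ_iff.mp (Finset.mem_range.mp hc)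
      have hK := gpiK0 B c hcB
      rw [show (0+(2*c)) = 2*c by ring]
      rw [show (2*B-(2*c)) = 2*(B-c) by omega]
      rw [show ρ^(2*c) = (ρ^2)^c from by rw [← pow_mul]]
      rw [show s^(2*(B-c)) = (s^2)^(B-c) from by rw [← pow_mul]]
      rw [show 2*(B-c) = 2*B - 2*c by omega] at *
      linear_combination ((ρ^2)^c * (s^2)^(B-c)) * hK
    rw [Finset.sum_congr rfl heven, ← Finset.mul_sum]
    have hbin : ∑ c ∈ Finset.range (B+1), ((ρ^2)^c * (s^2)^(B-c) * (B.choose c : ℝ)) = 1 := by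
      rw [← add_pow (ρ^2) (s^2) B]
      rw [show ρ^2 + s^2 = 1 from by linarith]
      simp
    rw [hbin, mul_one]
  · have h0 : gpiMu b = 0 := gpiMu_odd b hb
    rw [h0]
    apply Finset.sum_eq_zero
    intro j hj
    have hjb : j ≤ b := by simpa using Nat.lt_succ_iff.mp (Finset.mem_range.mp hj)
    rcases Nat.even_or_odd j with hj2 | hj2
    · obtain ⟨r, hr⟩ := hb
      obtain ⟨u, hu⟩ := hj2
      rw [gpiMu_odd (b-j) ⟨r-u, by omega⟩]
      ring
    · obtain ⟨u, hu⟩ := hj2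
      rw [show 0+j = j by ring, gpiMu_odd j ⟨u, by omega⟩]
      ring

lemma gpiT_one (ρ s : ℝ) (h1 : s^2 + ρ^2 = 1) (b : ℕ) :
    gpiT ρ s 1 b = ρ * b * gpiMu (b-1) := by
  rcases Nat.even_or_odd b with hb | hb
  · -- even b : both sides vanish
    have h0 : gpiMu (b-1) = 0 ∨ b = 0 := by
      rcases Nat.eq_zero_or_pos b with h | h
      · right; exact h
      · left
        obtain ⟨r, hr⟩ := hb
        exact gpiMu_odd (b-1) ⟨r-1, by omega⟩
    have hz : gpiT ρ s 1 b = 0 := by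
      apply Finset.sum_eq_zero
      intro j hj
      have hjb : j ≤ b := by simpa using Nat.lt_succ_iff.mp (Finset.mem_range.mp hj)
      rcases Nat.even_or_odd j with hj2 | hj2
      · obtain ⟨u, hu⟩ := hj2
        rw [gpiMu_odd (1+j) ⟨u, by omega⟩]
        ring
      · obtain ⟨r, hr⟩ := hb
        obtain ⟨u, hu⟩ := hj2
        rw [gpiMu_odd (b-j) ⟨r-u-1, by omega⟩]
        ring
    rw [hz]
    rcases h0 with h | h
    · rw [h]; ring
    · subst h; norm_num
  · obtain ⟨B, hB⟩ := hb
    subst hB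
    show ∑ j ∈ Finset.range (2*B+2),
      (((2*B+1).choose j : ℝ) * ρ^j * s^(2*B+1-j) * gpiMu (1+j) * gpiMu (2*B+1-j))
        = ρ * (2*B+1 : ℕ) * gpiMu (2*B+1-1)
    rw [gpi_sum_split' B (fun j => ((2*B+1).choose j : ℝ) * ρ^j * s^(2*B+1-j) * gpiMu (1+j) * gpiMu (2*B+1-j))]
    have heven : ∑ c ∈ Finset.range (B+1),
        (((2*B+1).choose (2*c) : ℝ) * ρ^(2*c) * s^(2*B+1-(2*c)) * gpiMu (1+(2*c)) * gpiMu (2*B+1-(2*c))) = 0 := by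
      apply Finset.sum_eq_zero
      intro c _
      rw [gpiMu_odd (1+2*c) ⟨c, by omega⟩]
      ring
    rw [heven, zero_add]
    have hodd : ∀ c ∈ Finset.range (B+1),
        (((2*B+1).choose (2*c+1) : ℝ) * ρ^(2*c+1) * s^(2*B+1-(2*c+1)) * gpiMu (1+(2*c+1)) * gpiMu (2*B+1-(2*c+1)))
          = ρ * (2*B+1 : ℕ) * gpiMu (2*B) * ((ρ^2)^c * (s^2)^(B-c) * (B.choose c : ℝ)) := by
      intro c hc
      have hcB : c ≤ B := by simpa using Nat.lt_succ_iff.mp (Finset.mem_range.mp hc)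
      have hK := gpiK1 B c hcB
      rw [show (1+(2*c+1)) = 2*c+2 by ring]
      rw [show (2*B+1-(2*c+1)) = 2*(B-c) by omega]
      rw [show ρ^(2*c+1) = ρ * (ρ^2)^c from by rw [← pow_mul]; ring]
      rw [show s^(2*(B-c)) = (s^2)^(B-c) from by rw [← pow_mul]]
      rw [show 2*(B-c) = 2*B - 2*c by omega] at *
      push_cast at hK ⊢
      linear_combination (ρ * (ρ^2)^c * (s^2)^(B-c)) * hK
    rw [Finset.sum_congr rfl hodd, ← Finset.mul_sum]
    have hbin : ∑ c ∈ Finset.range (B+1), ((ρ^2)^c * (s^2)^(B-c) * (B.choose c : ℝ)) = 1 := by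
      rw [← add_pow (ρ^2) (s^2) B]
      rw [show ρ^2 + s^2 = 1 from by linarith]
      simp
    rw [hbin, mul_one]
    rw [show 2*B+1-1 = 2*B by omega]

lemma gpiT_rec (ρ s : ℝ) (a b : ℕ) :
    gpiT ρ s (a+2) b = (a+1) * gpiT ρ s a b + ρ * b * gpiT ρ s (a+1) (b-1) := by
  rcases b with _ | B
  · show ∑ j ∈ Finset.range 1, _ = _
    rw [Finset.sum_range_one]
    show ((0:ℕ).choose 0 : ℝ) * ρ^0 * s^(0-0) * gpiMu (a+2+0) * gpiMu (0-0)
      = (a+1) * (∑ j ∈ Finset.range 1, ((0:ℕ).choose j : ℝ) * ρ^j * s^(0-j) * gpiMu (a+j) * gpiMu (0-j)) + ρ * (0:ℕ) * gpiT ρ s (a+1) (0-1)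
    rw [Finset.sum_range_one]
    simp only [Nat.choose_self, Nat.cast_one, pow_zero, Nat.sub_zero, Nat.cast_zero]
    rw [show a+2+0 = a+2 by ring, show a+0 = a by ring, gpiMu_add_two]
    push_cast
    ring
  · show ∑ j ∈ Finset.range (B+2),
        (((B+1).choose j : ℝ) * ρ^j * s^(B+1-j) * gpiMu (a+2+j) * gpiMu (B+1-j)) = _
    have hsplit : ∀ j ∈ Finset.range (B+2),
        (((B+1).choose j : ℝ) * ρ^j * s^(B+1-j) * gpiMu (a+2+j) * gpiMu (B+1-j))
          = (a+1) * (((B+1).choose j : ℝ) * ρ^j * s^(B+1-j) * gpiMu (a+j) * gpiMu (B+1-j))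
            + (j : ℝ) * (((B+1).choose j : ℝ) * ρ^j * s^(B+1-j) * gpiMu (a+j) * gpiMu (B+1-j)) := by
      intro j _
      rw [show a+2+j = (a+j)+2 by ring, gpiMu_add_two]
      push_cast
      ring
    rw [Finset.sum_congr rfl hsplit, Finset.sum_add_distrib, ← Finset.mul_sum]
    congr 1
    rw [Finset.sum_range_succ' (fun j => (j : ℝ) * (((B+1).choose j : ℝ) * ρ^j * s^(B+1-j) * gpiMu (a+j) * gpiMu (B+1-j))) (B+1)]
    simp only [Nat.cast_zero, zero_mul, add_zero]
    have hterm : ∀ i ∈ Finset.range (B+1),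
        ((i+1 : ℕ) : ℝ) * (((B+1).choose (i+1) : ℝ) * ρ^(i+1) * s^(B+1-(i+1)) * gpiMu (a+(i+1)) * gpiMu (B+1-(i+1)))
          = ρ * ((B+1:ℕ) : ℝ) * ((B.choose i : ℝ) * ρ^i * s^(B-i) * gpiMu ((a+1)+i) * gpiMu (B-i)) := by
      intro i _
      have hch : (i+1) * ((B+1).choose (i+1)) = (B+1) * (B.choose i) := by
        calc (i+1) * ((B+1).choose (i+1)) = (B+1).choose (i+1) * (i+1) := mul_comm _ _
          _ = Nat.succ B * B.choose i := (Nat.add_one_mul_choose_eq B i).symm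
          _ = (B+1) * (B.choose i) := rfl
      have hch' : ((i+1 : ℕ) : ℝ) * (((B+1).choose (i+1) : ℝ)) = ((B+1 : ℕ) : ℝ) * ((B.choose i : ℝ)) := by
        exact_mod_cast congrArg (Nat.cast : ℕ → ℝ) hch
      rw [show B+1-(i+1) = B-i by omega, show a+(i+1) = (a+1)+i by ring, pow_succ]
      push_cast at hch' ⊢
      linear_combination (ρ^i * ρ * s^(B-i) * gpiMu ((a+1)+i) * gpiMu (B-i)) * hch'
    calc ∑ i ∈ Finset.range (B+1), (((i+1 : ℕ)) : ℝ) * (((B+1).choose (i+1) : ℝ) * ρ^(i+1) * s^(B+1-(i+1)) * gpiMu (a+(i+1)) * gpiMu (B+1-(i+1)))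
        = ∑ i ∈ Finset.range (B+1), ρ * ((B+1:ℕ) : ℝ) * ((B.choose i : ℝ) * ρ^i * s^(B-i) * gpiMu ((a+1)+i) * gpiMu (B-i)) := by
          apply Finset.sum_congr rfl
          intro i hi
          exact_mod_cast hterm i hi
      _ = ρ * ((B+1:ℕ) : ℝ) * gpiT ρ s (a+1) B := by rw [← Finset.mul_sum]; rfl
      _ = ρ * ((B+1:ℕ) : ℝ) * gpiT ρ s (a+1) (B+1-1) := by norm_num

section gpiC
variable {ρ s : ℝ} (hρ : 0 ≤ ρ) (hs : 0 ≤ s) (h1 : s^2 + ρ^2 = 1)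
include hρ hs h1

lemma gpiC1 : ∀ (k b : ℕ), gpiMu (2*k) * gpiMu b ≤ gpiT ρ s (2*k) b := by
  intro k
  induction k with
  | zero =>
    intro b
    rw [show 2*0 = 0 by rfl, gpiT_zero ρ s h1 b, gpiMu_zero, one_mul]
  | succ k ih =>
    intro b
    rw [show 2*(k+1) = 2*k+2 by ring, gpiT_rec, gpiMu_add_two]
    have h2 := ih b
    have h3 : 0 ≤ ρ * b * gpiT ρ s (2*k+1) (b-1) := by
      have := gpiT_nonneg ρ s hρ hs (2*k+1) (b-1)
      positivity
    nlinarith [gpiMu_nonneg (2*k), gpiMu_nonneg b]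

lemma gpiC2 : ∀ (k c : ℕ),
    ρ * (2*k+1) * c * (gpiMu (2*k) * gpiMu (c-1)) ≤ gpiT ρ s (2*k+1) c := by
  intro k
  induction k with
  | zero =>
    intro c
    rw [show 2*0+1 = 1 by rfl, gpiT_one ρ s h1 c, gpiMu_zero]
    push_cast
    ring_nf
    exact le_rfl
  | succ k ih =>
    intro c
    rw [show 2*(k+1)+1 = (2*k+1)+2 by ring, gpiT_rec,
      show (2*k+1+1:ℕ) = 2*k+2 by omega, show (2*(k+1):ℕ) = 2*k+2 by ring]
    have h2 := ih c
    have h3 := gpiC1 hρ hs h1 (k+1) (c-1)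
    rw [show 2*(k+1) = 2*k+2 by ring] at h3
    have h4 : ρ * c * (gpiMu (2*k+2) * gpiMu (c-1)) ≤ ρ * c * gpiT ρ s (2*k+2) (c-1) := by
      apply mul_le_mul_of_nonneg_left h3
      positivity
    have h5 : gpiMu (2*k+2) = (2*k+1) * gpiMu (2*k) := by
      rw [show 2*k+2 = (2*k)+2 by rfl, gpiMu_add_two]; push_cast; ring
    push_cast [h5] at h4 ⊢
    nlinarith [gpiMu_nonneg (2*k), gpiMu_nonneg (c-1),
      mul_le_mul_of_nonneg_left h2 (show (0:ℝ) ≤ 2*(k:ℝ)+2 by positivity), h4]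

lemma gpiC3 : ∀ (k c : ℕ),
    gpiMu (2*k+2) * gpiMu (2*c+2) * (1 + (2*k+2)*(2*c+2)*ρ^2/2)
      ≤ gpiT ρ s (2*k+2) (2*c+2) := by
  intro k
  induction k with
  | zero =>
    intro c
    rw [show (0:ℕ)+2 = 2 by rfl]
    rw [show (2:ℕ) = 0+2 by rfl, gpiT_rec]
    rw [gpiT_zero ρ s h1 (2*c+2), gpiT_one ρ s h1 (2*c+2-1)]
    have h5 : gpiMu (2*c+2) = (2*c+1) * gpiMu (2*c) := by
      rw [show 2*c+2 = (2*c)+2 by rfl, gpiMu_add_two]; push_cast; ring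
    have h6 : (2*c+2-1 : ℕ) = 2*c+1 := by omega
    rw [h6]
    have h7 : gpiMu (2*c+1-1) = gpiMu (2*c) := by norm_num
    have h8 : gpiMu (2*0+2) = 1 := by norm_num [gpiMu]
    rw [h8]
    push_cast [h5, h7]
    nlinarith [gpiMu_nonneg (2*c)]
  | succ k ih =>
    intro c
    rw [show 2*(k+1)+2 = (2*k+2)+2 by ring, gpiT_rec]
    have h2 := ih c
    have h3 := gpiC2 hρ hs h1 (k+1) (2*c+2-1)
    rw [show 2*(k+1)+1 = 2*k+3 by ring, show (2*c+2-1 : ℕ) = 2*c+1 by omega,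
      show (2*c+1-1 : ℕ) = 2*c by omega] at h3
    have h4 : ρ * (2*c+2) * gpiT ρ s (2*k+3) (2*c+1)
        ≥ ρ * (2*c+2) * (ρ * (2*(k+1)+1) * (2*c+1) * (gpiMu (2*(k+1)) * gpiMu (2*c))) := by
      apply mul_le_mul_of_nonneg_left _ (by positivity)
      exact_mod_cast h3
    have h5 : gpiMu (2*c+2) = (2*c+1) * gpiMu (2*c) := by
      rw [show 2*c+2 = (2*c)+2 by rfl, gpiMu_add_two]; push_cast; ring
    have h6 : gpiMu ((2*k+2)+2) = (2*k+3) * gpiMu (2*k+2) := by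
      rw [gpiMu_add_two]; push_cast; ring
    have h7 : gpiMu (2*(k+1)) = gpiMu (2*k+2) := by norm_num [show 2*(k+1) = 2*k+2 by ring]
    rw [h6]
    rw [show (2*k+2+1 : ℕ) = 2*k+3 by omega, show (2*c+2-1 : ℕ) = 2*c+1 by omega]
    push_cast [h5, h7] at h2 h4 ⊢
    nlinarith [gpiMu_nonneg (2*k+2), gpiMu_nonneg (2*c), sq_nonneg ρ,
      mul_le_mul_of_nonneg_left h2 (show (0:ℝ) ≤ 2*(k:ℝ)+3 by positivity)]

end gpiC

lemma gpiT_neg (ρ s : ℝ) (k b : ℕ) : gpiT (-ρ) s (2*k) b = gpiT ρ s (2*k) b := by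
  apply Finset.sum_congr rfl
  intro j _
  rcases Nat.even_or_odd j with hj | hj
  · rw [hj.neg_pow]
  · obtain ⟨u, hu⟩ := hj
    rw [gpiMu_odd (2*k+j) ⟨k+u, by omega⟩]
    ring

lemma gpi_T_bound (ρ : ℝ) (hρ2 : ρ^2 < 1) (m n : ℕ) (hm : Even m) (hn : Even n)
    (hm2 : 2 ≤ m) (hn2 : 2 ≤ n) :
    gpiMu m * gpiMu n * (1 + (m:ℝ)*(n:ℝ)*ρ^2/2) ≤ gpiT ρ (Real.sqrt (1-ρ^2)) m n := by
  set s := Real.sqrt (1-ρ^2) with hsdef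
  have hs0 : 0 ≤ s := Real.sqrt_nonneg _
  have hs2 : s^2 = 1-ρ^2 := Real.sq_sqrt (by nlinarith)
  have h1 : s^2 + ρ^2 = 1 := by rw [hs2]; ring
  obtain ⟨r, hr⟩ := hm
  obtain ⟨t, ht⟩ := hn
  have hk : m = 2*(r-1)+2 := by omega
  have hc : n = 2*(t-1)+2 := by omega
  rcases le_or_gt 0 ρ with h | h
  · have hb := gpiC3 h hs0 h1 (r-1) (t-1)
    rw [← hk, ← hc] at hb
    have hcast : ((2*(r-1)+2 : ℕ) : ℝ) = (m:ℝ) := by rw [← hk]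
    have hcast2 : ((2*(t-1)+2 : ℕ) : ℝ) = (n:ℝ) := by rw [← hc]
    calc gpiMu m * gpiMu n * (1 + (m:ℝ)*(n:ℝ)*ρ^2/2)
        = gpiMu m * gpiMu n * (1 + (2*((r:ℝ)-1)+2)*(2*((t:ℝ)-1)+2)*ρ^2/2) := by
          have : (m:ℝ) = 2*((r:ℝ)-1)+2 := by
            rw [show (m:ℝ) = ((2*(r-1)+2 : ℕ) : ℝ) from hcast.symm]
            push_cast [Nat.cast_sub (by omega : 1 ≤ r)]
            ring
          have h2 : (n:ℝ) = 2*((t:ℝ)-1)+2 := by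
            rw [show (n:ℝ) = ((2*(t-1)+2 : ℕ) : ℝ) from hcast2.symm]
            push_cast [Nat.cast_sub (by omega : 1 ≤ t)]
            ring
          rw [this, h2]
      _ ≤ gpiT ρ s m n := by
          convert hb using 3 <;>
            push_cast [Nat.cast_sub (by omega : 1 ≤ r), Nat.cast_sub (by omega : 1 ≤ t)] <;>
            ring
  · have h1' : s^2 + (-ρ)^2 = 1 := by rw [hs2]; ring
    have hb := gpiC3 (by linarith : (0:ℝ) ≤ -ρ) hs0 h1' (r-1) (t-1)
    have hneg : gpiT (-ρ) s (2*(r-1)+2) (2*(t-1)+2) = gpiT ρ s (2*(r-1)+2) (2*(t-1)+2) := by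
      rw [show 2*(r-1)+2 = 2*((r-1)+1) by ring]
      exact gpiT_neg ρ s ((r-1)+1) (2*(t-1)+2)
    rw [hneg] at hb
    rw [← hk, ← hc] at hb
    have hρρ : (-ρ)^2 = ρ^2 := by ring
    rw [hρρ] at hb
    calc gpiMu m * gpiMu n * (1 + (m:ℝ)*(n:ℝ)*ρ^2/2)
        = gpiMu m * gpiMu n * (1 + (2*((r:ℝ)-1)+2)*(2*((t:ℝ)-1)+2)*ρ^2/2) := by
          have hm' : (m:ℝ) = 2*((r:ℝ)-1)+2 := by
            rw [show (m:ℝ) = ((2*(r-1)+2 : ℕ) : ℝ) from by rw [← hk]]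
            push_cast [Nat.cast_sub (by omega : 1 ≤ r)]
            ring
          have hn' : (n:ℝ) = 2*((t:ℝ)-1)+2 := by
            rw [show (n:ℝ) = ((2*(t-1)+2 : ℕ) : ℝ) from by rw [← hc]]
            push_cast [Nat.cast_sub (by omega : 1 ≤ t)]
            ring
          rw [hm', hn']
      _ ≤ gpiT ρ s m n := by
          convert hb using 3 <;>
            push_cast [Nat.cast_sub (by omega : 1 ≤ r), Nat.cast_sub (by omega : 1 ≤ t)] <;>
            ring

/-! ### Analysis: Gaussian moment integrals -/

lemma gpi_abs_integrable (k : ℕ) {a : ℝ} (ha : 0 < a) :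
    Integrable (fun x : ℝ => |x|^k * Real.exp (-a*x^2)) := by
  have hg : Integrable (fun x : ℝ =>
      Real.exp (-a*x^2) + ((k.factorial : ℝ) * (2/a)^k) * Real.exp (-(a/2)*x^2)) :=
    (integrable_exp_neg_mul_sq ha).add
      (((integrable_exp_neg_mul_sq (by linarith : (0:ℝ) < a/2))).const_mul _)
  apply hg.mono'
  · apply Continuous.aestronglyMeasurable
    fun_prop
  · apply Filter.Eventually.of_forall
    intro x
    have h0 : (0:ℝ) ≤ |x|^k * Real.exp (-a*x^2) := by positivity
    rw [Real.norm_of_nonneg h0]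
    have hb : |x|^k ≤ 1 + ((k.factorial : ℝ) * (2/a)^k) * Real.exp ((a/2)*x^2) := by
      have hcase : |x|^k ≤ 1 + (x^2)^k := by
        rcases le_or_gt (|x|) 1 with h | h
        · have : |x|^k ≤ 1 := pow_le_one₀ (abs_nonneg x) h
          have h2 : (0:ℝ) ≤ (x^2)^k := by positivity
          linarith
        · have h1 : |x|^k ≤ (|x|^2)^k := by
            apply pow_le_pow_left₀ (abs_nonneg x) ?_ k
            nlinarith [abs_nonneg x]
          have h2 : (|x|^2) = x^2 := sq_abs x
          rw [h2] at h1
          linarith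
      have hexp : (x^2)^k ≤ ((k.factorial : ℝ) * (2/a)^k) * Real.exp ((a/2)*x^2) := by
        have ht : (0:ℝ) ≤ (a/2)*x^2 := by positivity
        have := Real.pow_div_factorial_le_exp _ ht k
        have hfa : (0:ℝ) < (k.factorial : ℝ) := by positivity
        have h3 : ((a/2)*x^2)^k ≤ (k.factorial : ℝ) * Real.exp ((a/2)*x^2) := by
          rw [div_le_iff₀ hfa] at this
          linarith [this]
        have h4 : (x^2)^k = (2/a)^k * ((a/2)*x^2)^k := by
          rw [← mul_pow]
          congr 1
          field_simp
        rw [h4]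
        have h5 : (0:ℝ) ≤ (2/a)^k := by positivity
        calc (2/a)^k * ((a/2)*x^2)^k ≤ (2/a)^k * ((k.factorial : ℝ) * Real.exp ((a/2)*x^2)) :=
              mul_le_mul_of_nonneg_left h3 h5
          _ = ((k.factorial : ℝ) * (2/a)^k) * Real.exp ((a/2)*x^2) := by ring
      linarith
    have hepos : (0:ℝ) < Real.exp (-a*x^2) := Real.exp_pos _
    calc |x|^k * Real.exp (-a*x^2)
        ≤ (1 + ((k.factorial : ℝ) * (2/a)^k) * Real.exp ((a/2)*x^2)) * Real.exp (-a*x^2) :=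
          mul_le_mul_of_nonneg_right hb hepos.le
      _ = Real.exp (-a*x^2) + ((k.factorial : ℝ) * (2/a)^k) *
            (Real.exp ((a/2)*x^2) * Real.exp (-a*x^2)) := by ring
      _ = Real.exp (-a*x^2) + ((k.factorial : ℝ) * (2/a)^k) * Real.exp (-(a/2)*x^2) := by
          rw [← Real.exp_add]
          congr 2
          ring

lemma gpi_pow_integrable (k : ℕ) {a : ℝ} (ha : 0 < a) :
    Integrable (fun x : ℝ => x^k * Real.exp (-a*x^2)) := by
  apply (gpi_abs_integrable k ha).mono'
  · apply Continuous.aestronglyMeasurable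
    fun_prop
  · apply Filter.Eventually.of_forall
    intro x
    rw [Real.norm_eq_abs, abs_mul, abs_pow, Real.abs_exp]

lemma gpi_std_integrable (k : ℕ) :
    Integrable (fun x : ℝ => x^k * Real.exp (-x^2/2)) := by
  have h : (fun x : ℝ => x^k * Real.exp (-x^2/2))
      = fun x : ℝ => x^k * Real.exp (-(1/2 : ℝ)*x^2) := by
    funext x
    congr 1
    congr 1
    ring
  rw [h]
  exact gpi_pow_integrable k (by norm_num)

/-- k-th absolute... raw moment integral of the unnormalised standard Gaussian -/
noncomputable def gpiM (k : ℕ) : ℝ := ∫ x : ℝ, x^k * Real.exp (-x^2/2)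

lemma gpiM_zero : gpiM 0 = Real.sqrt (2*Real.pi) := by
  unfold gpiM
  have h : (fun x : ℝ => x^0 * Real.exp (-x^2/2))
      = fun x : ℝ => Real.exp (-(1/2 : ℝ)*x^2) := by
    funext x
    rw [pow_zero, one_mul]
    congr 1
    ring
  rw [h, integral_gaussian]
  congr 1
  rw [div_div_eq_mul_div, div_one]
  ring

lemma gpi_hasDerivAt (x : ℝ) :
    HasDerivAt (fun x : ℝ => -Real.exp (-x^2/2)) (x * Real.exp (-x^2/2)) x := by
  have h1 : HasDerivAt (fun x : ℝ => -x^2/2) (-x) x := by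
    have := (hasDerivAt_pow 2 x).neg.div_const 2
    refine this.congr_deriv ?_
    norm_num
    ring
  have h2 := (h1.exp).neg
  refine h2.congr_deriv ?_
  ring

lemma gpiM_one : gpiM 1 = 0 := by
  have key := integral_mul_deriv_eq_deriv_mul_of_integrable
    (u := fun _ : ℝ => (1:ℝ)) (u' := fun _ : ℝ => (0:ℝ))
    (v := fun x : ℝ => -Real.exp (-x^2/2)) (v' := fun x : ℝ => x * Real.exp (-x^2/2))
    (fun x _ => hasDerivAt_const x 1) (fun x _ => gpi_hasDerivAt x) ?_ ?_ ?_
  · have key2 : gpiM 1 = -∫ x : ℝ, (0:ℝ) * (-Real.exp (-x^2/2)) := by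
      unfold gpiM
      rw [← key]
      congr 1
      funext x
      ring
    rw [key2]
    simp
  · have e1 : ((fun _ : ℝ => (1:ℝ)) * fun x : ℝ => x * Real.exp (-x^2/2))
        = fun x : ℝ => x^1 * Real.exp (-x^2/2) := by
      funext x
      simp only [Pi.mul_apply]
      ring
    rw [e1]; exact gpi_std_integrable 1
  · have e2 : ((fun _ : ℝ => (0:ℝ)) * fun x : ℝ => -Real.exp (-x^2/2))
        = fun _ : ℝ => (0:ℝ) := by
      funext x
      simp
    rw [e2]; exact integrable_zero _ _ _
  · have e3 : ((fun _ : ℝ => (1:ℝ)) * fun x : ℝ => -Real.exp (-x^2/2))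
        = fun x : ℝ => -(x^0 * Real.exp (-x^2/2)) := by
      funext x
      simp
    rw [e3]; exact (gpi_std_integrable 0).neg

lemma gpiM_rec (k : ℕ) : gpiM (k+2) = (k+1) * gpiM k := by
  have key := integral_mul_deriv_eq_deriv_mul_of_integrable
    (u := fun x : ℝ => x^(k+1)) (u' := fun x : ℝ => ((k:ℝ)+1) * x^k)
    (v := fun x : ℝ => -Real.exp (-x^2/2)) (v' := fun x : ℝ => x * Real.exp (-x^2/2))
    (fun x _ => by simpa using (hasDerivAt_pow (k+1) x)) (fun x _ => gpi_hasDerivAt x) ?_ ?_ ?_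
  · have key2 : gpiM (k+2) = -∫ x : ℝ, ((k:ℝ)+1) * x^k * (-Real.exp (-x^2/2)) := by
      unfold gpiM
      rw [← key]
      congr 1
      funext x
      ring
    rw [key2]
    have h3 : ∫ x : ℝ, ((k:ℝ)+1) * x^k * (-Real.exp (-x^2/2))
        = (-((k:ℝ)+1)) * gpiM k := by
      unfold gpiM
      rw [← integral_const_mul]
      congr 1
      funext x
      ring
    rw [h3]
    ring
  · have e1 : ((fun x : ℝ => x^(k+1)) * fun x : ℝ => x * Real.exp (-x^2/2))
        = fun x : ℝ => x^(k+2) * Real.exp (-x^2/2) := by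
      funext x
      simp only [Pi.mul_apply]
      ring
    rw [e1]; exact gpi_std_integrable (k+2)
  · have e2 : ((fun x : ℝ => ((k:ℝ)+1) * x^k) * fun x : ℝ => -Real.exp (-x^2/2))
        = fun x : ℝ => (-((k:ℝ)+1)) * (x^k * Real.exp (-x^2/2)) := by
      funext x
      simp only [Pi.mul_apply]
      ring
    rw [e2]; exact (gpi_std_integrable k).const_mul _
  · have e3 : ((fun x : ℝ => x^(k+1)) * fun x : ℝ => -Real.exp (-x^2/2))
        = fun x : ℝ => -(x^(k+1) * Real.exp (-x^2/2)) := by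
      funext x
      simp only [Pi.mul_apply]
      ring
    rw [e3]; exact (gpi_std_integrable (k+1)).neg

lemma gpiM_eq (k : ℕ) : gpiM k = Real.sqrt (2*Real.pi) * gpiMu k := by
  induction k using Nat.strong_induction_on with
  | _ k ih =>
    match k with
    | 0 => rw [gpiM_zero, gpiMu_zero, mul_one]
    | 1 => rw [gpiM_one, gpiMu_one, mul_zero]
    | (k+2) =>
      rw [gpiM_rec, gpiMu_add_two, ih k (by omega)]
      ring

lemma gpi_affine (G : ℝ → ℝ) {c : ℝ} (hc : 0 < c) (d : ℝ) :
    ∫ y : ℝ, G y = c * ∫ v : ℝ, G (c*v + d) := by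
  have h1 : ∫ v : ℝ, G (c*v + d) = |c⁻¹| • ∫ y : ℝ, G (y + d) :=
    MeasureTheory.Measure.integral_comp_mul_left (fun y => G (y + d)) c
  rw [MeasureTheory.integral_add_right_eq_self] at h1
  rw [h1, abs_of_pos (inv_pos.mpr hc), smul_eq_mul]
  field_simp

lemma gpi_E1 (σ : ℝ) (hσ : 0 < σ) (m : ℕ) (hm : Even m) :
    E1 σ (m:ℝ) = σ^m * gpiMu m := by
  unfold E1
  have h1 : (fun x : ℝ => |x| ^ ((m:ℕ):ℝ) * (Real.sqrt (2*π*σ^2))⁻¹ * Real.exp (-x^2/(2*σ^2)))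
      = fun x : ℝ => (Real.sqrt (2*π*σ^2))⁻¹ * (x^m * Real.exp (-x^2/(2*σ^2))) := by
    funext x
    rw [Real.rpow_natCast, hm.pow_abs]
    ring
  rw [h1, integral_const_mul]
  have h2 : ∫ x : ℝ, x^m * Real.exp (-x^2/(2*σ^2))
      = σ * ∫ u : ℝ, (σ*u + 0)^m * Real.exp (-(σ*u+0)^2/(2*σ^2)) :=
    gpi_affine (fun x => x^m * Real.exp (-x^2/(2*σ^2))) hσ 0
  have h3 : (fun u : ℝ => (σ*u + 0)^m * Real.exp (-(σ*u+0)^2/(2*σ^2)))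
      = fun u : ℝ => σ^m * (u^m * Real.exp (-u^2/2)) := by
    funext u
    rw [add_zero, mul_pow]
    have hh : -(σ*u)^2/(2*σ^2) = -u^2/2 := by
      field_simp
    rw [hh]
    ring
  rw [h2, h3, integral_const_mul]
  have h4 : Real.sqrt (2*π*σ^2) = Real.sqrt (2*π) * σ := by
    rw [show 2*π*σ^2 = (2*π)*σ^2 from by ring, Real.sqrt_mul (by positivity), Real.sqrt_sq hσ.le]
  rw [show (∫ u : ℝ, u^m * Real.exp (-u^2/2)) = gpiM m from rfl, gpiM_eq, h4]
  have hsp : Real.sqrt (2*π) > 0 := Real.sqrt_pos.mpr (by positivity)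
  field_simp

lemma gpi_inner_sum (ρ s u : ℝ) (n : ℕ) :
    ∫ v : ℝ, (ρ*u+s*v)^n * Real.exp (-v^2/2)
      = ∑ j ∈ Finset.range (n+1), (n.choose j : ℝ) * s^j * ρ^(n-j) * u^(n-j) * gpiM j := by
  have h1 : (fun v : ℝ => (ρ*u+s*v)^n * Real.exp (-v^2/2))
      = fun v : ℝ => ∑ j ∈ Finset.range (n+1),
          ((n.choose j : ℝ) * s^j * ρ^(n-j) * u^(n-j)) * (v^j * Real.exp (-v^2/2)) := by
    funext v
    rw [show ρ*u+s*v = s*v + ρ*u from by ring, add_pow, Finset.sum_mul]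
    apply Finset.sum_congr rfl
    intro j hj
    rw [mul_pow, mul_pow]
    ring
  rw [h1, integral_finset_sum]
  · apply Finset.sum_congr rfl
    intro j hj
    rw [integral_const_mul]
    rfl
  · intro j hj
    exact (gpi_std_integrable j).const_mul _

lemma gpi_outer_sum (ρ s : ℝ) (m n : ℕ) :
    ∫ u : ℝ, (u^m * Real.exp (-u^2/2))
        * (∑ j ∈ Finset.range (n+1), (n.choose j : ℝ) * s^j * ρ^(n-j) * u^(n-j) * gpiM j)
      = ∑ j ∈ Finset.range (n+1),
          (n.choose j : ℝ) * s^j * ρ^(n-j) * gpiM j * gpiM (m+(n-j)) := by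
  have h1 : (fun u : ℝ => (u^m * Real.exp (-u^2/2))
        * (∑ j ∈ Finset.range (n+1), (n.choose j : ℝ) * s^j * ρ^(n-j) * u^(n-j) * gpiM j))
      = fun u : ℝ => ∑ j ∈ Finset.range (n+1),
          ((n.choose j : ℝ) * s^j * ρ^(n-j) * gpiM j) * (u^(m+(n-j)) * Real.exp (-u^2/2)) := by
    funext u
    rw [Finset.mul_sum]
    apply Finset.sum_congr rfl
    intro j hj
    rw [pow_add]
    ring
  rw [h1, integral_finset_sum]
  · apply Finset.sum_congr rfl
    intro j hj
    rw [integral_const_mul]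
    show _ * gpiM (m+(n-j)) = _
    ring
  · intro j hj
    exact (gpi_std_integrable (m+(n-j))).const_mul _

lemma gpi_F_integrable (σ₁ σ₂ ρ : ℝ) (m n : ℕ) (hσ₁ : 0 < σ₁) (hσ₂ : 0 < σ₂)
    (hρ1 : -1 < ρ) (hρ2 : ρ < 1) :
    Integrable (fun q : ℝ × ℝ => q.1^m * q.2^n * gaussDensity2 σ₁ σ₂ ρ q.1 q.2)
      (volume.prod volume) := by
  have hρsq : ρ^2 < 1 := by nlinarith
  have hD : (0:ℝ) < 2*(1-ρ^2) := by nlinarith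
  have habsρ : |ρ| < 1 := abs_lt.mpr ⟨hρ1, hρ2⟩
  have h1ρ : (0:ℝ) < 1 - |ρ| := by linarith
  set s := Real.sqrt (1-ρ^2) with hsdef
  have hs0 : 0 < s := Real.sqrt_pos.mpr (by nlinarith)
  set Kc := (2*π*σ₁*σ₂*s)⁻¹ with hKdef
  have hKc : 0 < Kc := by
    rw [hKdef]
    have hpi := Real.pi_pos
    positivity
  set α := (1-|ρ|)/((2*(1-ρ^2))*σ₁^2) with hαdef
  set β := (1-|ρ|)/((2*(1-ρ^2))*σ₂^2) with hβdef
  have hα : 0 < α := by rw [hαdef]; positivity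
  have hβ : 0 < β := by rw [hβdef]; positivity
  have hg : Integrable (fun x : ℝ => Kc * (|x|^m * Real.exp (-α*x^2))) :=
    (gpi_abs_integrable m hα).const_mul Kc
  have hh : Integrable (fun y : ℝ => |y|^n * Real.exp (-β*y^2)) :=
    gpi_abs_integrable n hβ
  have hprod := hg.mul_prod hh
  apply hprod.mono'
  · apply Continuous.aestronglyMeasurable
    unfold gaussDensity2
    fun_prop
  · apply Filter.Eventually.of_forall
    rintro ⟨x, y⟩
    simp only
    have hQ : (1-|ρ|)*(x^2/σ₁^2 + y^2/σ₂^2)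
        ≤ x^2/σ₁^2 - 2*ρ*x*y/(σ₁*σ₂) + y^2/σ₂^2 := by
      have k1 : 2*(ρ*x*y)*(σ₁*σ₂) ≤ 2*(|ρ| * |x| * |y|)*(σ₁*σ₂) := by
        have h := le_abs_self (ρ*x*y)
        rw [abs_mul, abs_mul] at h
        nlinarith [mul_pos hσ₁ hσ₂]
      have k2 : 2*(|x| * |y|)*(σ₁*σ₂) ≤ x^2*σ₂^2 + y^2*σ₁^2 := by
        nlinarith [sq_nonneg (|x| *σ₂ - |y| *σ₁), sq_abs x, sq_abs y, abs_nonneg x, abs_nonneg y]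
      have k3 : 2*(ρ*x*y)*(σ₁*σ₂) ≤ |ρ| *(x^2*σ₂^2 + y^2*σ₁^2) := by
        nlinarith [abs_nonneg ρ, k1, k2, abs_nonneg x, abs_nonneg y]
      have expand : (x^2/σ₁^2 - 2*ρ*x*y/(σ₁*σ₂) + y^2/σ₂^2) - (1-|ρ|)*(x^2/σ₁^2 + y^2/σ₂^2)
          = (|ρ| *(x^2*σ₂^2 + y^2*σ₁^2) - 2*(ρ*x*y)*(σ₁*σ₂)) / (σ₁^2*σ₂^2) := by
        field_simp
        ring
      have hnn : 0 ≤ (x^2/σ₁^2 - 2*ρ*x*y/(σ₁*σ₂) + y^2/σ₂^2)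
          - (1-|ρ|)*(x^2/σ₁^2 + y^2/σ₂^2) := by
        rw [expand]
        apply div_nonneg _ (by positivity)
        linarith
      linarith
    have harg : -(x^2/σ₁^2 - 2*ρ*x*y/(σ₁*σ₂) + y^2/σ₂^2)/(2*(1-ρ^2))
        ≤ -α*x^2 + -β*y^2 := by
      have heq : -α*x^2 + -β*y^2 = -((1-|ρ|)*(x^2/σ₁^2 + y^2/σ₂^2))/(2*(1-ρ^2)) := by
        rw [hαdef, hβdef]
        field_simp
        ring
      rw [heq]
      exact (div_le_div_iff_of_pos_right hD).mpr (by linarith)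
    have hgd : gaussDensity2 σ₁ σ₂ ρ x y
        = Kc * Real.exp (-(x^2/σ₁^2 - 2*ρ*x*y/(σ₁*σ₂) + y^2/σ₂^2)/(2*(1-ρ^2))) := by
      unfold gaussDensity2
      rw [← hsdef, ← hKdef]
    have hgdpos : 0 < gaussDensity2 σ₁ σ₂ ρ x y := by
      rw [hgd]
      positivity
    rw [Real.norm_eq_abs, abs_mul, abs_mul, abs_pow, abs_pow, abs_of_pos hgdpos, hgd]
    have hexp : Real.exp (-(x^2/σ₁^2 - 2*ρ*x*y/(σ₁*σ₂) + y^2/σ₂^2)/(2*(1-ρ^2)))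
        ≤ Real.exp (-α*x^2) * Real.exp (-β*y^2) := by
      rw [← Real.exp_add]
      exact Real.exp_le_exp.mpr harg
    calc |x|^m * |y|^n * (Kc * Real.exp (-(x^2/σ₁^2 - 2*ρ*x*y/(σ₁*σ₂) + y^2/σ₂^2)/(2*(1-ρ^2))))
        ≤ |x|^m * |y|^n * (Kc * (Real.exp (-α*x^2) * Real.exp (-β*y^2))) := by
          apply mul_le_mul_of_nonneg_left _ (by positivity)
          exact mul_le_mul_of_nonneg_left hexp hKc.le
      _ = Kc * (|x|^m * Real.exp (-α*x^2)) * (|y|^n * Real.exp (-β*y^2)) := by ring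

lemma gpi_pt (σ₁ σ₂ ρ : ℝ) (m n : ℕ) (hσ₁ : 0 < σ₁) (hσ₂ : 0 < σ₂)
    (hρsq : ρ^2 < 1) (u v : ℝ) :
    (σ₁*u)^m * ((σ₂*Real.sqrt (1-ρ^2))*v + σ₂*ρ*(σ₁*u)/σ₁)^n
        * gaussDensity2 σ₁ σ₂ ρ (σ₁*u) ((σ₂*Real.sqrt (1-ρ^2))*v + σ₂*ρ*(σ₁*u)/σ₁)
      = ((2*π*σ₁*σ₂*Real.sqrt (1-ρ^2))⁻¹ * (σ₁^m * σ₂^n) * (u^m * Real.exp (-u^2/2)))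
          * ((ρ*u+Real.sqrt (1-ρ^2)*v)^n * Real.exp (-v^2/2)) := by
  set s := Real.sqrt (1-ρ^2) with hsdef
  have hs2 : s^2 = 1-ρ^2 := Real.sq_sqrt (by nlinarith)
  have h1ρ : (1-ρ^2) ≠ 0 := by nlinarith
  have harg : (σ₂*s)*v + σ₂*ρ*(σ₁*u)/σ₁ = σ₂*(ρ*u+s*v) := by
    field_simp
    ring
  rw [harg]
  unfold gaussDensity2
  rw [← hsdef]
  have hexp : -((σ₁*u)^2/σ₁^2 - 2*ρ*(σ₁*u)*(σ₂*(ρ*u+s*v))/(σ₁*σ₂) + (σ₂*(ρ*u+s*v))^2/σ₂^2)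
        /(2*(1-ρ^2)) = -u^2/2 + -v^2/2 := by
    have key : (σ₁*u)^2/σ₁^2 - 2*ρ*(σ₁*u)*(σ₂*(ρ*u+s*v))/(σ₁*σ₂) + (σ₂*(ρ*u+s*v))^2/σ₂^2
        = (1-ρ^2)*(u^2+v^2) := by
      have e1 : (σ₁*u)^2/σ₁^2 = u^2 := by
        field_simp
      have e2 : 2*ρ*(σ₁*u)*(σ₂*(ρ*u+s*v))/(σ₁*σ₂) = 2*ρ*u*(ρ*u+s*v) := by
        field_simp
      have e3 : (σ₂*(ρ*u+s*v))^2/σ₂^2 = (ρ*u+s*v)^2 := by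
        field_simp
      rw [e1, e2, e3]
      linear_combination (v^2) * hs2
    rw [key]
    field_simp
    ring
  rw [hexp, Real.exp_add, mul_pow σ₁ u, mul_pow σ₂ (ρ*u+s*v)]
  ring

lemma gpi_E2 (σ₁ σ₂ ρ : ℝ) (m n : ℕ) (hσ₁ : 0 < σ₁) (hσ₂ : 0 < σ₂)
    (hρ1 : -1 < ρ) (hρ2 : ρ < 1) (hm : Even m) (hn : Even n) :
    E2 σ₁ σ₂ ρ (m:ℝ) (n:ℝ) = σ₁^m * σ₂^n * gpiT ρ (Real.sqrt (1-ρ^2)) m n := by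
  have hρsq : ρ^2 < 1 := by nlinarith
  set s := Real.sqrt (1-ρ^2) with hsdef
  have hs0 : 0 < s := Real.sqrt_pos.mpr (by nlinarith)
  have hFi := gpi_F_integrable σ₁ σ₂ ρ m n hσ₁ hσ₂ hρ1 hρ2
  have h0 : E2 σ₁ σ₂ ρ (m:ℝ) (n:ℝ)
      = ∫ q : ℝ×ℝ, q.1^m * q.2^n * gaussDensity2 σ₁ σ₂ ρ q.1 q.2 := by
    unfold E2
    congr 1
    funext q
    rw [Real.rpow_natCast, Real.rpow_natCast, hm.pow_abs, hn.pow_abs]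
  rw [h0, MeasureTheory.Measure.volume_eq_prod, MeasureTheory.integral_prod _ hFi]
  -- inner substitution y = (σ₂ s) v + σ₂ ρ x / σ₁
  have hin : ∀ x : ℝ, (∫ y : ℝ, x^m * y^n * gaussDensity2 σ₁ σ₂ ρ x y)
      = (σ₂*s) * ∫ v : ℝ, x^m * ((σ₂*s)*v + σ₂*ρ*x/σ₁)^n
          * gaussDensity2 σ₁ σ₂ ρ x ((σ₂*s)*v + σ₂*ρ*x/σ₁) := by
    intro x
    exact gpi_affine (fun y => x^m * y^n * gaussDensity2 σ₁ σ₂ ρ x y)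
      (by positivity) (σ₂*ρ*x/σ₁)
  have h1 : (∫ x : ℝ, ∫ y : ℝ, x^m * y^n * gaussDensity2 σ₁ σ₂ ρ x y)
      = (σ₂*s) * ∫ x : ℝ, ∫ v : ℝ, x^m * ((σ₂*s)*v + σ₂*ρ*x/σ₁)^n
          * gaussDensity2 σ₁ σ₂ ρ x ((σ₂*s)*v + σ₂*ρ*x/σ₁) := by
    rw [← integral_const_mul]
    congr 1
    funext x
    exact hin x
  rw [h1]
  -- outer substitution x = σ₁ u
  have h2 : (∫ x : ℝ, ∫ v : ℝ, x^m * ((σ₂*s)*v + σ₂*ρ*x/σ₁)^n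
        * gaussDensity2 σ₁ σ₂ ρ x ((σ₂*s)*v + σ₂*ρ*x/σ₁))
      = σ₁ * ∫ u : ℝ, ∫ v : ℝ, (σ₁*u+0)^m * ((σ₂*s)*v + σ₂*ρ*(σ₁*u+0)/σ₁)^n
          * gaussDensity2 σ₁ σ₂ ρ (σ₁*u+0) ((σ₂*s)*v + σ₂*ρ*(σ₁*u+0)/σ₁) :=
    gpi_affine (fun x => ∫ v : ℝ, x^m * ((σ₂*s)*v + σ₂*ρ*x/σ₁)^n
        * gaussDensity2 σ₁ σ₂ ρ x ((σ₂*s)*v + σ₂*ρ*x/σ₁)) hσ₁ 0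
  rw [h2]
  -- evaluate inner integral
  have h3 : ∀ u : ℝ, (∫ v : ℝ, (σ₁*u+0)^m * ((σ₂*s)*v + σ₂*ρ*(σ₁*u+0)/σ₁)^n
        * gaussDensity2 σ₁ σ₂ ρ (σ₁*u+0) ((σ₂*s)*v + σ₂*ρ*(σ₁*u+0)/σ₁))
      = ((2*π*σ₁*σ₂*s)⁻¹ * (σ₁^m * σ₂^n) * (u^m * Real.exp (-u^2/2)))
          * (∑ j ∈ Finset.range (n+1), (n.choose j : ℝ) * s^j * ρ^(n-j) * u^(n-j) * gpiM j) := by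
    intro u
    have e : (fun v : ℝ => (σ₁*u+0)^m * ((σ₂*s)*v + σ₂*ρ*(σ₁*u+0)/σ₁)^n
          * gaussDensity2 σ₁ σ₂ ρ (σ₁*u+0) ((σ₂*s)*v + σ₂*ρ*(σ₁*u+0)/σ₁))
        = fun v : ℝ => ((2*π*σ₁*σ₂*s)⁻¹ * (σ₁^m * σ₂^n) * (u^m * Real.exp (-u^2/2)))
          * ((ρ*u+s*v)^n * Real.exp (-v^2/2)) := by
      funext v
      rw [add_zero]
      exact gpi_pt σ₁ σ₂ ρ m n hσ₁ hσ₂ hρsq u v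
    rw [e, integral_const_mul, gpi_inner_sum]
  have h4 : (∫ u : ℝ, ∫ v : ℝ, (σ₁*u+0)^m * ((σ₂*s)*v + σ₂*ρ*(σ₁*u+0)/σ₁)^n
        * gaussDensity2 σ₁ σ₂ ρ (σ₁*u+0) ((σ₂*s)*v + σ₂*ρ*(σ₁*u+0)/σ₁))
      = ((2*π*σ₁*σ₂*s)⁻¹ * (σ₁^m * σ₂^n))
          * ∑ j ∈ Finset.range (n+1),
              (n.choose j : ℝ) * s^j * ρ^(n-j) * gpiM j * gpiM (m+(n-j)) := by
    rw [← gpi_outer_sum ρ s m n, ← integral_const_mul]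
    congr 1
    funext u
    rw [h3 u]
    ring
  rw [h4]
  -- rewrite moments via gpiMu and clean up constants
  have h5 : ∑ j ∈ Finset.range (n+1), (n.choose j : ℝ) * s^j * ρ^(n-j) * gpiM j * gpiM (m+(n-j))
      = (2*π) * ∑ j ∈ Finset.range (n+1),
          (n.choose j : ℝ) * s^j * ρ^(n-j) * gpiMu j * gpiMu (m+(n-j)) := by
    rw [Finset.mul_sum]
    apply Finset.sum_congr rfl
    intro j hj
    rw [gpiM_eq j, gpiM_eq (m+(n-j))]
    have hsq : Real.sqrt (2*π) * Real.sqrt (2*π) = 2*π :=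
      Real.mul_self_sqrt (by positivity)
    linear_combination ((n.choose j : ℝ) * s^j * ρ^(n-j) * gpiMu j * gpiMu (m+(n-j))) * hsq
  rw [h5]
  -- sum reflection to match gpiT
  have h6 : ∑ j ∈ Finset.range (n+1),
        (n.choose j : ℝ) * s^j * ρ^(n-j) * gpiMu j * gpiMu (m+(n-j))
      = gpiT ρ s m n := by
    show _ = ∑ j ∈ Finset.range (n+1), (n.choose j : ℝ) * ρ^j * s^(n-j) * gpiMu (m+j) * gpiMu (n-j)
    rw [← Finset.sum_range_reflect
      (fun i => (n.choose i : ℝ) * ρ^i * s^(n-i) * gpiMu (m+i) * gpiMu (n-i)) (n+1)]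
    apply Finset.sum_congr rfl
    intro j hj
    have hjn : j ≤ n := Nat.lt_succ_iff.mp (Finset.mem_range.mp hj)
    have hA : n + 1 - 1 - j = n - j := by omega
    rw [hA]
    have hB : n.choose (n-j) = n.choose j := Nat.choose_symm hjn
    have hC : n - (n - j) = j := by omega
    rw [hB, hC]
    ring
  rw [h6]
  -- constants
  have hπ : (0:ℝ) < π := Real.pi_pos
  field_simp

theorem gpi_quantitative_even_even (σ₁ σ₂ ρ : ℝ) (m n : ℕ)
    (hσ₁ : 0 < σ₁) (hσ₂ : 0 < σ₂) (hρ : ρ ∈ Set.Ioo (-1 : ℝ) 1)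
    (hm : 2 < m) (hn : 2 < n) (hmeven : Even m) (hneven : Even n) :
    E2 σ₁ σ₂ ρ (m : ℝ) (n : ℝ) - E1 σ₁ (m : ℝ) * E1 σ₂ (n : ℝ) ≥
      (Nat.doubleFactorial (m - 1) : ℝ) * (Nat.doubleFactorial (n - 1) : ℝ) *
        m * n * σ₁ ^ (m : ℝ) * σ₂ ^ (n : ℝ) * ρ ^ 2 / 2 := by
  obtain ⟨hρ1, hρ2⟩ := hρ
  have hρsq : ρ^2 < 1 := by nlinarith
  rw [gpi_E2 σ₁ σ₂ ρ m n hσ₁ hσ₂ hρ1 hρ2 hmeven hneven,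
    gpi_E1 σ₁ hσ₁ m hmeven, gpi_E1 σ₂ hσ₂ n hneven,
    Real.rpow_natCast σ₁ m, Real.rpow_natCast σ₂ n,
    ← gpiMu_doubleFact m hmeven, ← gpiMu_doubleFact n hneven]
  have hb := gpi_T_bound ρ hρsq m n hmeven hneven (by omega) (by omega)
  have hσm : (0:ℝ) < σ₁^m := pow_pos hσ₁ m
  have hσn : (0:ℝ) < σ₂^n := pow_pos hσ₂ n
  have key : σ₁^m*σ₂^n * (gpiMu m * gpiMu n * (1 + (m:ℝ)*(n:ℝ)*ρ^2/2))
      ≤ σ₁^m*σ₂^n * gpiT ρ (Real.sqrt (1-ρ^2)) m n :=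
    mul_le_mul_of_nonneg_left hb (by positivity)
  nlinarith [key]
end

section
/- Let α1, α2 > −1 with (1 − α1/2)(1 − α2/2) ≥ 0 (i.e. both α1, α2 ≤ 2 or both α1, α2 ≥ 2). Then for every h ∈ [0,1), F(1−α1/2, 1−α2/2; 3/2; h) ≥ 1. -/
open MeasureTheory Real

/-- Gauss hypergeometric series F(a,b;c;z). -/
noncomputable def hypF (a b c z : ℝ) : ℝ :=
  ∑' n : ℕ, (ascPochhammer ℝ n).eval a * (ascPochhammer ℝ n).eval b /
    ((ascPochhammer ℝ n).eval c * (n.factorial : ℝ)) * z ^ n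

open MeasureTheory Real PowerSeries Filter Finset

namespace HypAux

noncomputable def pch (x : ℝ) (n : ℕ) : ℝ := (ascPochhammer ℝ n).eval x

lemma pch_zero (x : ℝ) : pch x 0 = 1 := by simp [pch]

lemma pch_succ (x : ℝ) (n : ℕ) : pch x (n+1) = pch x n * (x + n) := by
  simp [pch, ascPochhammer_succ_eval]

lemma pch_nonneg {x : ℝ} (hx : 0 ≤ x) (n : ℕ) : 0 ≤ pch x n := by
  induction n with
  | zero => simp [pch_zero]
  | succ n ih => rw [pch_succ]; positivity

lemma pch_pos {x : ℝ} (hx : 0 < x) (n : ℕ) : 0 < pch x n :=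
  ascPochhammer_pos n x hx

lemma coeff_X_mul' (φ : ℝ⟦X⟧) (n : ℕ) :
    coeff n (X * φ) = if n = 0 then 0 else coeff (n-1) φ := by
  cases n with
  | zero => simp [coeff_zero_eq_constantCoeff]
  | succ n => simp [coeff_succ_X_mul]

lemma coeff_R1 (u : ℝ) (S : ℝ⟦X⟧) (n : ℕ) :
    coeff n ((1 - X) * (d⁄dX ℝ S) - C u * S)
      = ((n:ℝ)+1) * coeff (n+1) S - (u+n) * coeff n S := by
  have e : (1 - X) * (d⁄dX ℝ S) - C u * S
      = d⁄dX ℝ S - X * (d⁄dX ℝ S) - C u * S := by ring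
  rw [e, map_sub, map_sub, coeff_C_mul, coeff_X_mul', coeff_derivative]
  cases n with
  | zero => simp
  | succ n => simp [coeff_derivative]; push_cast; ring

lemma coeff_L2 (a b c : ℝ) (S : ℝ⟦X⟧) (n : ℕ) :
    coeff n (X*(1-X) * (d⁄dX ℝ (d⁄dX ℝ S)) + (C c - C (a+b+1) * X) * (d⁄dX ℝ S)
        - C (a*b) * S)
      = ((n:ℝ)+1)*((n:ℝ)+c) * coeff (n+1) S - ((n:ℝ)+a)*((n:ℝ)+b) * coeff n S := by
  have e : X*(1-X) * (d⁄dX ℝ (d⁄dX ℝ S)) + (C c - C (a+b+1) * X) * (d⁄dX ℝ S)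
        - C (a*b) * S
      = X * (d⁄dX ℝ (d⁄dX ℝ S)) - X * (X * (d⁄dX ℝ (d⁄dX ℝ S)))
        + (C c * (d⁄dX ℝ S) - C (a+b+1) * (X * (d⁄dX ℝ S))) - C (a*b) * S := by ring
  rw [e]
  rw [map_sub, map_add, map_sub, map_sub]
  rw [coeff_C_mul, coeff_C_mul, coeff_C_mul, coeff_X_mul', coeff_X_mul', coeff_X_mul']
  match n with
  | 0 => simp [coeff_derivative]
  | 1 => simp [coeff_derivative]; ring
  | (m+2) => simp [coeff_derivative, coeff_X_mul']; push_cast; ring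

/-- `Bs u` is the power series of `(1-X)^(-u)`. -/
noncomputable def Bs (u : ℝ) : ℝ⟦X⟧ := PowerSeries.mk fun n => pch u n / n.factorial

/-- `Fs a b c` is the Gauss hypergeometric power series. -/
noncomputable def Fs (a b c : ℝ) : ℝ⟦X⟧ :=
  PowerSeries.mk fun n => pch a n * pch b n / (pch c n * n.factorial)

def IsR1 (u : ℝ) (S : ℝ⟦X⟧) : Prop := (1 - X) * (d⁄dX ℝ S) = C u * S

def IsL2 (a b c : ℝ) (S : ℝ⟦X⟧) : Prop :=
  X*(1-X) * (d⁄dX ℝ (d⁄dX ℝ S)) + (C c - C (a+b+1) * X) * (d⁄dX ℝ S) = C (a*b) * S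

lemma isR1_iff (u : ℝ) (S : ℝ⟦X⟧) :
    IsR1 u S ↔ ∀ n : ℕ, ((n:ℝ)+1) * coeff (n+1) S = (u+n) * coeff n S := by
  rw [IsR1, ← sub_eq_zero, PowerSeries.ext_iff]
  refine forall_congr' fun n => ?_
  rw [coeff_R1, map_zero, sub_eq_zero]

lemma isL2_iff (a b c : ℝ) (S : ℝ⟦X⟧) :
    IsL2 a b c S ↔ ∀ n : ℕ,
      ((n:ℝ)+1)*((n:ℝ)+c) * coeff (n+1) S = ((n:ℝ)+a)*((n:ℝ)+b) * coeff n S := by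
  rw [IsL2, ← sub_eq_zero, PowerSeries.ext_iff]
  refine forall_congr' fun n => ?_
  rw [coeff_L2, map_zero, sub_eq_zero]

lemma isR1_Bs (u : ℝ) : IsR1 u (Bs u) := by
  rw [isR1_iff]
  intro n
  have hf : (n.factorial : ℝ) ≠ 0 := Nat.cast_ne_zero.mpr n.factorial_ne_zero
  simp only [Bs, coeff_mk, pch_succ, Nat.factorial_succ]
  push_cast
  field_simp

lemma isL2_Fs (a b c : ℝ) (hc : 0 < c) : IsL2 a b c (Fs a b c) := by
  rw [isL2_iff]
  intro n
  have hf : (n.factorial : ℝ) ≠ 0 := Nat.cast_ne_zero.mpr n.factorial_ne_zero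
  have hcn : (0:ℝ) < pch c n := pch_pos hc n
  have hcn' : (0:ℝ) < c + n := by positivity
  simp only [Fs, coeff_mk, pch_succ, Nat.factorial_succ]
  push_cast
  field_simp
  ring

lemma R1_unique {u : ℝ} {S T : ℝ⟦X⟧} (hS : IsR1 u S) (hT : IsR1 u T)
    (h0 : coeff 0 S = coeff 0 T) : S = T := by
  rw [isR1_iff] at hS hT
  ext n
  induction n with
  | zero => exact h0
  | succ n ih =>
      have e1 := hS n
      have e2 := hT n
      rw [ih] at e1
      have hne : ((n:ℝ)+1) ≠ 0 := by positivity
      exact mul_left_cancel₀ hne (e1.trans e2.symm)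

lemma L2_unique {a b c : ℝ} {S T : ℝ⟦X⟧} (hc : 0 < c) (hS : IsL2 a b c S) (hT : IsL2 a b c T)
    (h0 : coeff 0 S = coeff 0 T) : S = T := by
  rw [isL2_iff] at hS hT
  ext n
  induction n with
  | zero => exact h0
  | succ n ih =>
      have e1 := hS n
      have e2 := hT n
      rw [ih] at e1
      have hne : ((n:ℝ)+1)*((n:ℝ)+c) ≠ 0 := by positivity
      exact mul_left_cancel₀ hne (e1.trans e2.symm)

lemma isR1_mul {u v : ℝ} {S T : ℝ⟦X⟧} (hS : IsR1 u S) (hT : IsR1 v T) :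
    IsR1 (u+v) (S*T) := by
  unfold IsR1 at *
  rw [Derivation.leibniz, smul_eq_mul, smul_eq_mul, map_add]
  linear_combination T * hS + S * hT

lemma Bs_mul (u v : ℝ) : Bs u * Bs v = Bs (u+v) := by
  refine R1_unique (isR1_mul (isR1_Bs u) (isR1_Bs v)) (isR1_Bs (u+v)) ?_
  simp [Bs, coeff_zero_eq_constantCoeff, pch_zero]

lemma Bs_zero : Bs 0 = 1 := by
  have h0 : ∀ n : ℕ, pch 0 n = if n = 0 then 1 else 0 := by
    intro n
    induction n with
    | zero => simp [pch_zero]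
    | succ n ih =>
        rw [pch_succ, ih]
        rcases n with _|m <;> simp
  ext n
  rcases n with _|n <;> simp [Bs, coeff_mk, h0, coeff_one, pch_zero, coeff_zero_eq_constantCoeff]

end HypAux

namespace HypAux

lemma ring_key {R : Type*} [CommRing R] (x g w dg dw ddg ddw pa pb pc : R)
    (h1 : (1-x)*dg = (pa+pb-pc)*g)
    (h1' : (1-x)*ddg = (1+(pa+pb-pc))*dg)
    (h2 : x*(1-x)*ddw + (pc-((pc-pa)+(pc-pb)+1)*x)*dw = ((pc-pa)*(pc-pb))*w) :
    (1-x)^2 * (x*(1-x)*(ddg*w + 2*dg*dw + g*ddw) + (pc-(pa+pb+1)*x)*(dg*w + g*dw)) =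
      (1-x)^2*((pa*pb)*(g*w)) := by
  linear_combination ((1-x)^2*x*w) * h1' +
    ((1+(pa+pb-pc))*x*(1-x)*w + 2*x*(1-x)^2*dw + (1-x)*(pc-(pa+pb+1)*x)*w) * h1 +
    ((1-x)^2*g) * h2

lemma one_sub_X_ne_zero : (1 - X : ℝ⟦X⟧) ≠ 0 := by
  intro h
  have := congrArg (coeff 0) h
  simp [coeff_zero_eq_constantCoeff] at this

lemma euler_step {a b c : ℝ} {G W : ℝ⟦X⟧}
    (hG : IsR1 (a+b-c) G) (hW : IsL2 (c-a) (c-b) c W) :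
    IsL2 a b c (G*W) := by
  have h1 : (1 - X) * (d⁄dX ℝ G) = (C a + C b - C c) * G := by
    rw [← map_add, ← map_sub]; exact hG
  have h1' : (1 - X) * (d⁄dX ℝ (d⁄dX ℝ G)) = (1 + (C a + C b - C c)) * (d⁄dX ℝ G) := by
    have hd := congrArg (d⁄dX ℝ) h1
    rw [Derivation.leibniz, Derivation.leibniz, smul_eq_mul, smul_eq_mul, smul_eq_mul,
      smul_eq_mul] at hd
    simp only [map_sub, map_add, Derivation.map_one_eq_zero, derivative_X, derivative_C] at hd
    linear_combination hd
  have h2 : X*(1-X) * (d⁄dX ℝ (d⁄dX ℝ W))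
      + (C c - ((C c - C a) + (C c - C b) + 1) * X) * (d⁄dX ℝ W)
      = ((C c - C a) * (C c - C b)) * W := by
    have hw := hW
    rw [IsL2] at hw
    simp only [map_add, map_sub, map_mul, map_one] at hw
    linear_combination hw
  have eD : d⁄dX ℝ (G*W) = G * d⁄dX ℝ W + W * d⁄dX ℝ G := by
    rw [Derivation.leibniz, smul_eq_mul, smul_eq_mul]
  have eDD : d⁄dX ℝ (d⁄dX ℝ (G*W))
      = (d⁄dX ℝ (d⁄dX ℝ G)) * W + 2 * (d⁄dX ℝ G * d⁄dX ℝ W) + G * (d⁄dX ℝ (d⁄dX ℝ W)) := by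
    rw [eD]
    rw [map_add, Derivation.leibniz, Derivation.leibniz, smul_eq_mul, smul_eq_mul,
      smul_eq_mul, smul_eq_mul]
    ring
  have key := ring_key (X : ℝ⟦X⟧) G W (d⁄dX ℝ G) (d⁄dX ℝ W)
    (d⁄dX ℝ (d⁄dX ℝ G)) (d⁄dX ℝ (d⁄dX ℝ W)) (C a) (C b) (C c) h1 h1' h2
  rw [IsL2]
  apply mul_left_cancel₀ (pow_ne_zero 2 one_sub_X_ne_zero)
  rw [eDD, eD]
  simp only [map_add, map_mul, map_one]
  linear_combination key

lemma euler_id (a b c : ℝ) (hc : 0 < c) :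
    Bs (a+b-c) * Fs (c-a) (c-b) c = Fs a b c := by
  refine L2_unique hc (euler_step (isR1_Bs _) (isL2_Fs _ _ _ hc)) (isL2_Fs _ _ _ hc) ?_
  simp [Bs, Fs, coeff_zero_eq_constantCoeff, pch_zero]

end HypAux

open Topology
namespace HypAux

lemma tendsto_shift_div (x y : ℝ) (hy : 0 < y) :
    Tendsto (fun n : ℕ => ((n:ℝ)+x)/((n:ℝ)+y)) atTop (𝓝 1) := by
  have hden : Tendsto (fun n : ℕ => (n:ℝ)+y) atTop atTop :=
    tendsto_atTop_add_const_right _ y tendsto_natCast_atTop_atTop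
  have hinv : Tendsto (fun n : ℕ => ((n:ℝ)+y)⁻¹) atTop (𝓝 0) := hden.inv_tendsto_atTop
  have h2 : Tendsto (fun n : ℕ => 1 + (x - y) * ((n:ℝ)+y)⁻¹) atTop (𝓝 (1 + (x-y)*0)) :=
    tendsto_const_nhds.add (tendsto_const_nhds.mul hinv)
  rw [mul_zero, add_zero] at h2
  refine Tendsto.congr (fun n => ?_) h2
  have hpos : (0:ℝ) < (n:ℝ) + y := by have := Nat.cast_nonneg (α:=ℝ) n; linarith
  field_simp
  ring

lemma summable_abs_of_ratio {f q : ℕ → ℝ} {l : ℝ} (hl0 : 0 ≤ l) (hl1 : l < 1)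
    (hq : Tendsto q atTop (𝓝 l)) (hf : ∀ n, f (n+1) = q n * f n) :
    Summable (fun n => |f n|) := by
  have hqa : Tendsto (fun n => |q n|) atTop (𝓝 |l|) := hq.abs
  have hlr : |l| < (1+l)/2 := by rw [abs_of_nonneg hl0]; linarith
  have hev : ∀ᶠ n in atTop, |q n| < (1+l)/2 := hqa.eventually_lt_const hlr
  refine summable_of_ratio_norm_eventually_le (r := (1+l)/2) (by linarith) ?_
  filter_upwards [hev] with n hn
  rw [Real.norm_eq_abs, Real.norm_eq_abs, abs_abs, abs_abs, hf n, abs_mul]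
  exact mul_le_mul_of_nonneg_right hn.le (abs_nonneg _)

lemma summable_abs_F (a b c h : ℝ) (hc : 0 < c) (h0 : 0 ≤ h) (h1 : h < 1) :
    Summable (fun n => |coeff n (Fs a b c) * h^n|) := by
  have hq : Tendsto (fun n : ℕ => (((n:ℝ)+a)/((n:ℝ)+c)) * ((((n:ℝ)+b)/((n:ℝ)+1)) * h))
      atTop (𝓝 (1 * (1 * h))) :=
    (tendsto_shift_div a c hc).mul ((tendsto_shift_div b 1 one_pos).mul tendsto_const_nhds)
  rw [one_mul, one_mul] at hq
  refine summable_abs_of_ratio h0 h1 hq ?_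
  intro n
  have hcn : (0:ℝ) < pch c n := pch_pos hc n
  have hcn1 : (0:ℝ) < (n:ℝ) + c := by have := Nat.cast_nonneg (α:=ℝ) n; linarith
  have hn1 : (0:ℝ) < (n:ℝ) + 1 := by positivity
  have hfn : (0:ℝ) < (n.factorial : ℝ) := by exact_mod_cast n.factorial_pos
  simp only [Fs, coeff_mk, pch_succ, Nat.factorial_succ, pow_succ]
  push_cast
  field_simp
  ring

lemma summable_abs_B (u h : ℝ) (h0 : 0 ≤ h) (h1 : h < 1) :
    Summable (fun n => |coeff n (Bs u) * h^n|) := by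
  have hq : Tendsto (fun n : ℕ => (((n:ℝ)+u)/((n:ℝ)+1)) * h) atTop (𝓝 (1 * h)) :=
    (tendsto_shift_div u 1 one_pos).mul tendsto_const_nhds
  rw [one_mul] at hq
  refine summable_abs_of_ratio h0 h1 hq ?_
  intro n
  have hn1 : (0:ℝ) < (n:ℝ) + 1 := by positivity
  have hfn : (0:ℝ) < (n.factorial : ℝ) := by exact_mod_cast n.factorial_pos
  simp only [Bs, coeff_mk, pch_succ, Nat.factorial_succ, pow_succ]
  push_cast
  field_simp
  ring

lemma tsum_coeff_mul (P Q : ℝ⟦X⟧) (h : ℝ)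
    (hP : Summable fun n => |coeff n P * h^n|)
    (hQ : Summable fun n => |coeff n Q * h^n|) :
    (∑' n, coeff n P * h^n) * (∑' n, coeff n Q * h^n)
      = ∑' n, coeff n (P*Q) * h^n := by
  have hP' : Summable fun n => ‖coeff n P * h^n‖ := by simpa only [Real.norm_eq_abs] using hP
  have hQ' : Summable fun n => ‖coeff n Q * h^n‖ := by simpa only [Real.norm_eq_abs] using hQ
  rw [tsum_mul_tsum_eq_tsum_sum_antidiagonal_of_summable_norm hP' hQ']
  congr 1
  funext n
  rw [coeff_mul, Finset.sum_mul]
  refine Finset.sum_congr rfl fun kl hkl => ?_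
  have hmem : kl.1 + kl.2 = n := Finset.HasAntidiagonal.mem_antidiagonal.mp hkl
  rw [← hmem, pow_add]
  ring

lemma pch_key {c A B : ℝ} (hc : 0 < c) (hA : c ≤ A) (hB : c ≤ B) (n : ℕ) :
    pch c n * pch (A+B-c) n ≤ pch A n * pch B n ∧ 0 ≤ pch c n * pch (A+B-c) n := by
  induction n with
  | zero => simp [pch_zero]
  | succ n ih =>
      obtain ⟨ih1, ih2⟩ := ih
      have h1 : 0 ≤ pch A n * pch B n := le_trans ih2 ih1
      have hnn := Nat.cast_nonneg (α:=ℝ) n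
      have hfac : (0:ℝ) ≤ (c+n)*((A+B-c)+n) :=
        mul_nonneg (by linarith) (by linarith)
      have hfac2 : (c+n)*((A+B-c)+n) ≤ (A+n)*(B+n) := by
        nlinarith [mul_nonneg (sub_nonneg.mpr hA) (sub_nonneg.mpr hB)]
      constructor
      · rw [pch_succ, pch_succ, pch_succ, pch_succ]
        calc pch c n * (c+n) * (pch (A+B-c) n * ((A+B-c)+n))
            = (pch c n * pch (A+B-c) n) * ((c+n)*((A+B-c)+n)) := by ring
          _ ≤ (pch A n * pch B n) * ((c+n)*((A+B-c)+n)) :=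
              mul_le_mul_of_nonneg_right ih1 hfac
          _ ≤ (pch A n * pch B n) * ((A+n)*(B+n)) :=
              mul_le_mul_of_nonneg_left hfac2 h1
          _ = pch A n * (A+n) * (pch B n * (B+n)) := by ring
      · rw [pch_succ, pch_succ]
        calc (0:ℝ) ≤ (pch c n * pch (A+B-c) n) * ((c+n)*((A+B-c)+n)) := mul_nonneg ih2 hfac
          _ = pch c n * (c+n) * (pch (A+B-c) n * ((A+B-c)+n)) := by ring

end HypAux

namespace HypAux

lemma hypF_eq (a b c z : ℝ) : hypF a b c z = ∑' n, coeff n (Fs a b c) * z^n := by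
  simp [hypF, Fs, coeff_mk, pch]

lemma tsum_one (h : ℝ) : ∑' n : ℕ, coeff n (1 : ℝ⟦X⟧) * h^n = 1 := by
  have e : (fun n : ℕ => coeff n (1 : ℝ⟦X⟧) * h^n) = fun n => if n = 0 then 1 else 0 := by
    funext n
    rcases n with _|n <;> simp [coeff_one, coeff_zero_eq_constantCoeff]
  rw [e]
  exact tsum_ite_eq 0 1

lemma main (a b c : ℝ) (hc : c = 3/2) (ha : a < 3/2) (hb : b < 3/2) (hab : 0 ≤ a * b)
    (h : ℝ) (h0 : 0 ≤ h) (h1 : h < 1) : 1 ≤ hypF a b c h := by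
  subst hc
  have hc32 : (0:ℝ) < 3/2 := by norm_num
  rw [hypF_eq]
  have hcases : (0 ≤ a ∧ 0 ≤ b) ∨ (a ≤ 0 ∧ b ≤ 0) := by
    rcases le_total 0 a with h1'|h1' <;> rcases le_total 0 b with h2'|h2'
    · exact Or.inl ⟨h1', h2'⟩
    · rcases eq_or_lt_of_le h1' with he|hgt
      · exact Or.inr ⟨he.ge, h2'⟩
      · exact Or.inl ⟨h1', by nlinarith⟩
    · rcases eq_or_lt_of_le h2' with he|hgt
      · exact Or.inr ⟨h1', he.ge⟩
      · exact Or.inl ⟨by nlinarith, h2'⟩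
    · exact Or.inr ⟨h1', h2'⟩
  have sT := summable_abs_F a b (3/2) h hc32 h0 h1
  rcases hcases with ⟨ha0, hb0⟩ | ⟨ha0, hb0⟩
  · -- easy case: all terms nonnegative
    have hnn : ∀ j : ℕ, j ≠ 0 → 0 ≤ coeff j (Fs a b (3/2)) * h^j := by
      intro j _
      simp only [Fs, coeff_mk]
      have := pch_nonneg ha0 j
      have := pch_nonneg hb0 j
      have := (pch_pos hc32 j).le
      have hfj : (0:ℝ) ≤ (j.factorial : ℝ) := by positivity
      have hhj : (0:ℝ) ≤ h^j := pow_nonneg h0 j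
      apply mul_nonneg (div_nonneg (by positivity) (by positivity)) hhj
    have h0term : coeff 0 (Fs a b (3/2)) * h^0 = 1 := by
      simp [Fs, coeff_mk, pch_zero]
    have := Summable.le_tsum sT.of_abs 0 hnn
    rwa [h0term] at this
  · -- hard case via Euler transformation
    set u := a + b - 3/2 with hu
    set v := (3/2 : ℝ) - a - b with hv
    have hv32 : (3/2:ℝ) ≤ v := by rw [hv]; linarith
    have hA : (3/2:ℝ) ≤ 3/2 - a := by linarith
    have hB : (3/2:ℝ) ≤ 3/2 - b := by linarith
    have sW := summable_abs_F (3/2-a) (3/2-b) (3/2) h hc32 h0 h1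
    have sG := summable_abs_B u h h0 h1
    have sGm := summable_abs_B v h h0 h1
    -- Cauchy products
    have cGW : (∑' n, coeff n (Bs u) * h^n) * (∑' n, coeff n (Fs (3/2-a) (3/2-b) (3/2)) * h^n)
        = ∑' n, coeff n (Fs a b (3/2)) * h^n := by
      rw [tsum_coeff_mul _ _ h sG sW]
      have he : Bs u * Fs (3/2-a) (3/2-b) (3/2) = Fs a b (3/2) := euler_id a b (3/2) hc32
      rw [he]
    have cGGm : (∑' n, coeff n (Bs u) * h^n) * (∑' n, coeff n (Bs v) * h^n) = 1 := by
      rw [tsum_coeff_mul _ _ h sG sGm, Bs_mul]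
      have huv : u + v = 0 := by rw [hu, hv]; ring
      rw [huv, Bs_zero, tsum_one]
    -- 1 ≤ ∑ Gm
    have hGm1 : 1 ≤ ∑' n, coeff n (Bs v) * h^n := by
      have hnn : ∀ j : ℕ, j ≠ 0 → 0 ≤ coeff j (Bs v) * h^j := by
        intro j _
        simp only [Bs, coeff_mk]
        have := pch_nonneg (le_trans (by norm_num : (0:ℝ) ≤ 3/2) hv32) j
        have hfj : (0:ℝ) ≤ (j.factorial : ℝ) := by positivity
        exact mul_nonneg (div_nonneg this hfj) (pow_nonneg h0 j)
      have h0term : coeff 0 (Bs v) * h^0 = 1 := by simp [Bs, coeff_mk, pch_zero]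
      have := Summable.le_tsum sGm.of_abs 0 hnn
      rwa [h0term] at this
    -- termwise: Gm ≤ W
    have hWGm : (∑' n, coeff n (Bs v) * h^n)
        ≤ ∑' n, coeff n (Fs (3/2-a) (3/2-b) (3/2)) * h^n := by
      refine Summable.tsum_le_tsum (fun n => ?_) sGm.of_abs sW.of_abs
      have hkey := pch_key hc32 hA hB n
      have hveq : (3/2 - a) + (3/2 - b) - 3/2 = v := by rw [hv]; ring
      rw [hveq] at hkey
      obtain ⟨hk1, hk2⟩ := hkey
      simp only [Bs, Fs, coeff_mk]
      have hcp : (0:ℝ) < pch (3/2) n := pch_pos hc32 n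
      have hfp : (0:ℝ) < (n.factorial : ℝ) := by exact_mod_cast n.factorial_pos
      have hdiv : pch v n / (n.factorial : ℝ)
          ≤ pch (3/2-a) n * pch (3/2-b) n / (pch (3/2) n * n.factorial) := by
        rw [div_le_div_iff₀ hfp (by positivity)]
        nlinarith
      exact mul_le_mul_of_nonneg_right hdiv (pow_nonneg h0 n)
    -- ∑ G > 0
    have hGpos : 0 < ∑' n, coeff n (Bs u) * h^n := by
      by_contra hG
      push_neg at hG
      nlinarith
    calc (1:ℝ) = (∑' n, coeff n (Bs u) * h^n) * (∑' n, coeff n (Bs v) * h^n) := cGGm.symm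
      _ ≤ (∑' n, coeff n (Bs u) * h^n)
            * (∑' n, coeff n (Fs (3/2-a) (3/2-b) (3/2)) * h^n) :=
          mul_le_mul_of_nonneg_left hWGm hGpos.le
      _ = ∑' n, coeff n (Fs a b (3/2)) * h^n := cGW

end HypAux

theorem hypF_ge_one (α₁ α₂ : ℝ) (hα₁ : -1 < α₁) (hα₂ : -1 < α₂)
    (hprod : 0 ≤ (1 - α₁ / 2) * (1 - α₂ / 2)) :
    ∀ h ∈ Set.Ico (0 : ℝ) 1, hypF (1 - α₁ / 2) (1 - α₂ / 2) (3 / 2) h ≥ 1 := by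
  intro h hh
  exact HypAux.main (1 - α₁/2) (1 - α₂/2) (3/2) rfl (by linarith) (by linarith) hprod
    h hh.1 hh.2
end

section
/- Let α1 > 2 and 0 < α2 < 2. Then for every h ∈ [0,1), F(1−α1/2, 1−α2/2; 3/2; h) ≥ Γ(3/2)·Γ((α1+α2−1)/2) / (Γ((α1+1)/2)·Γ((α2+1)/2)); that is, the function h ↦ F(1−α1/2, 1−α2/2; 3/2; h) is bounded below on [0,1) by its limiting value at h = 1 given by Gauss's summation theorem. -/
open Filter

noncomputable def pA (n : ℕ) (x : ℝ) : ℝ := (ascPochhammer ℝ n).eval x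

lemma pA_zero (x : ℝ) : pA 0 x = 1 := by simp [pA]

lemma pA_succ (n : ℕ) (x : ℝ) : pA (n+1) x = pA n x * (x + n) := by
  rw [pA, pA, ascPochhammer_succ_right]; simp [Polynomial.eval_mul]

lemma pA_pos {x : ℝ} (hx : 0 < x) (n : ℕ) : 0 < pA n x := by
  induction n with
  | zero => simp [pA_zero]
  | succ n ih => rw [pA_succ]; positivity

lemma pA_nonneg {x : ℝ} (hx : 0 ≤ x) (n : ℕ) : 0 ≤ pA n x := by
  induction n with
  | zero => simp [pA_zero]
  | succ n ih => rw [pA_succ]; positivity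

lemma pA_abs_le {x q : ℝ} (hq : 0 ≤ q) (hxq : |x| ≤ q) (n : ℕ) : |pA n x| ≤ pA n q := by
  induction n with
  | zero => simp [pA_zero]
  | succ n ih =>
    rw [pA_succ, pA_succ, abs_mul]
    have h1 : |x + (n:ℝ)| ≤ q + n := by
      calc |x + (n:ℝ)| ≤ |x| + |(n:ℝ)| := abs_add_le _ _
      _ ≤ q + n := by rw [abs_of_nonneg (by positivity : (0:ℝ) ≤ (n:ℝ))]; linarith
    exact mul_le_mul ih h1 (abs_nonneg _) (pA_nonneg hq n)

/-- master summability lemma -/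
lemma summable_master {q r : ℝ} (hq : 0 < q) (hr0 : 0 < r) (hr : r < 1) :
    Summable (fun n : ℕ => pA n q * (n+1)^2 * r^n / n.factorial) := by
  set f : ℕ → ℝ := fun n => pA n q * (n+1)^2 * r^n / n.factorial with hf
  have hfpos : ∀ n, 0 < f n := by
    intro n
    have := pA_pos hq n
    have : (0:ℝ) < n.factorial := by positivity
    positivity
  apply summable_of_ratio_test_tendsto_lt_one hr
  · exact Eventually.of_forall fun n => (hfpos n).ne'
  · have key : ∀ n : ℕ, ‖f (n+1)‖ / ‖f n‖ =
        ((q + n) / (n+1)) * ((n+2)/(n+1))^2 * r := by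
      intro n
      have h1 : (0:ℝ) < n.factorial := by positivity
      have h2 : (0:ℝ) < pA n q := pA_pos hq n
      have h3 : (0:ℝ) < q + n := by positivity
      rw [Real.norm_eq_abs, Real.norm_eq_abs, abs_of_pos (hfpos _), abs_of_pos (hfpos _), hf]
      simp only [pA_succ, pow_succ, Nat.factorial_succ, Nat.cast_mul, Nat.cast_add,
        Nat.cast_one]
      field_simp
      ring
    simp only [key]
    have main : Tendsto (fun n : ℕ => ((q + n)/(n+1)) * ((n+2)/(n+1))^2 * r) atTop
        (nhds (1 * 1^2 * r)) := by
      apply Tendsto.mul _ tendsto_const_nhds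
      apply Tendsto.mul
      · have : (fun n : ℕ => (q + n)/(n+1)) = fun n : ℕ => (q-1)/(n+1) + 1 := by
          funext n; have : (0:ℝ) < (n:ℝ)+1 := by positivity
          field_simp
          ring
        rw [this]
        have h0 : Tendsto (fun n : ℕ => (q-1)/(n+1)) atTop (nhds 0) := by
          have := (tendsto_const_div_atTop_nhds_zero_nat (q-1)).comp (tendsto_add_atTop_nat 1)
          rw [show (fun n : ℕ => (q-1)/((n:ℝ)+1)) = ((fun n : ℕ => (q - 1) / (n:ℝ)) ∘ fun a => a + 1) by funext n; simp [Function.comp]]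
          exact this
        simpa using h0.add tendsto_const_nhds
      · apply Tendsto.pow
        have : (fun n : ℕ => ((n:ℝ)+2)/(n+1)) = fun n : ℕ => (1:ℝ)/(n+1) + 1 := by
          funext n; have : (0:ℝ) < (n:ℝ)+1 := by positivity
          field_simp; ring
        rw [this]
        have h0 : Tendsto (fun n : ℕ => (1:ℝ)/(n+1)) atTop (nhds 0) := by
          have := (tendsto_const_div_atTop_nhds_zero_nat (1:ℝ)).comp (tendsto_add_atTop_nat 1)
          rw [show (fun n : ℕ => (1:ℝ)/((n:ℝ)+1)) = ((fun n : ℕ => (1:ℝ) / (n:ℝ)) ∘ fun a => a + 1) by funext n; simp [Function.comp]]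
          exact this
        simpa using h0.add tendsto_const_nhds
    simpa using main

set_option maxHeartbeats 2000000 in
lemma binom_hasSum {p x : ℝ} (hx0 : 0 ≤ x) (hx1 : x < 1) :
    HasSum (fun n : ℕ => pA n (-p) * x^n / n.factorial) ((1-x) ^ p) := by
  classical
  set r : ℝ := (1+x)/2 with hrdef
  have hr0 : 0 < r := by positivity
  have hr1 : r < 1 := by rw [hrdef]; linarith
  have hxr : x < r := by rw [hrdef]; linarith
  set q : ℝ := |p| + 1 with hqdef
  have hq0 : 0 < q := by positivity
  have hpq : |(-p)| ≤ q := by rw [abs_neg, hqdef]; linarith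
  have hq0' := pA_nonneg hq0.le
  set g : ℕ → ℝ → ℝ := fun n y => pA n (-p) * y^n / n.factorial with hgdef
  set g' : ℕ → ℝ → ℝ := fun n y => pA n (-p) * ((n:ℝ) * y^(n-1)) / n.factorial with hg'def
  set u : ℕ → ℝ := fun n => (1/r) * (pA n q * ((n:ℝ)+1)^2 * r^n / n.factorial) with hudef
  have hu : Summable u := (summable_master hq0 hr0 hr1).mul_left _
  have hinvr : (1:ℝ) ≤ 1/r := by rw [le_div_iff₀ hr0]; linarith
  have hn1 : ∀ n : ℕ, (1:ℝ) ≤ ((n:ℝ)+1)^2 := by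
    intro n; nlinarith [Nat.cast_nonneg (α := ℝ) n]
  have hstep : ∀ n : ℕ, pA n q * ((n:ℝ)+1)^2 * r^n / n.factorial ≤ u n := by
    intro n
    rw [hudef]
    have hb : (0:ℝ) ≤ pA n q * ((n:ℝ)+1)^2 * r^n / n.factorial := by
      have := hq0' n; positivity
    exact le_mul_of_one_le_left hb hinvr
  -- norm bound for g
  have hgb : ∀ (n : ℕ) (y : ℝ), |y| ≤ r → ‖g n y‖ ≤ u n := by
    intro n y hy
    have h1 : (0:ℝ) < n.factorial := by positivity
    have h2 : |pA n (-p)| ≤ pA n q := pA_abs_le hq0.le hpq n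
    have h3 : |y|^n ≤ r^n := pow_le_pow_left₀ (abs_nonneg _) hy n
    have heq : ‖g n y‖ = |pA n (-p)| * |y|^n / n.factorial := by
      rw [hgdef]; simp [Real.norm_eq_abs, abs_div, abs_mul, abs_pow, abs_of_pos h1]
    rw [heq]
    refine le_trans ?_ (hstep n)
    calc |pA n (-p)| * |y|^n / n.factorial = |pA n (-p)| * 1 * |y|^n / n.factorial := by ring
    _ ≤ pA n q * ((n:ℝ)+1)^2 * r^n / n.factorial := by
        gcongr <;> first
          | exact hq0' n | exact hn1 n | exact h2 | exact h3
          | exact mul_nonneg (hq0' n) (by positivity) | positivity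
  -- norm bound for g'
  have hg'b : ∀ (n : ℕ) (y : ℝ), |y| ≤ r → ‖g' n y‖ ≤ u n := by
    intro n y hy
    have h1 : (0:ℝ) < n.factorial := by positivity
    have h2 : |pA n (-p)| ≤ pA n q := pA_abs_le hq0.le hpq n
    have h3 : |y|^(n-1) ≤ r^(n-1) := pow_le_pow_left₀ (abs_nonneg _) hy _
    have heq : ‖g' n y‖ = |pA n (-p)| * ((n:ℝ) * |y|^(n-1)) / n.factorial := by
      rw [hg'def]
      simp [Real.norm_eq_abs, abs_div, abs_mul, abs_pow, abs_of_pos h1,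
        abs_of_nonneg (Nat.cast_nonneg (α := ℝ) n)]
    have hrpow : r^(n-1) ≤ r^n / r := by
      cases n with
      | zero => simpa using hinvr
      | succ m => simp [pow_succ, mul_div_assoc, div_self hr0.ne']
    rw [heq, hudef]
    calc |pA n (-p)| * ((n:ℝ) * |y|^(n-1)) / n.factorial
        ≤ pA n q * ((n:ℝ) * (r^n / r)) / n.factorial := by
          gcongr <;> first
            | exact hq0' n | exact h2 | exact le_trans h3 hrpow | positivity
    _ ≤ pA n q * (((n:ℝ)+1)^2 * (r^n / r)) / n.factorial := by
          gcongr <;> first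
            | exact hq0' n | positivity
            | nlinarith [Nat.cast_nonneg (α := ℝ) n]
    _ = (1/r) * (pA n q * ((n:ℝ)+1)^2 * r^n / n.factorial) := by
          field_simp
  -- summability
  have hsumg : ∀ y : ℝ, |y| ≤ r → Summable (fun n => g n y) := fun y hy =>
    Summable.of_norm_bounded hu (fun n => hgb n y hy)
  have hsumg' : ∀ y : ℝ, |y| ≤ r → Summable (fun n => g' n y) := fun y hy =>
    Summable.of_norm_bounded hu (fun n => hg'b n y hy)
  have h0t : (0:ℝ) ∈ Set.Ioo (-r) r := by constructor <;> simp [hr0]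
  have hder : ∀ (n : ℕ), ∀ y ∈ Set.Ioo (-r) r, HasDerivAt (g n) (g' n y) y := by
    intro n y _
    have := (hasDerivAt_pow n y).const_mul (pA n (-p))
    exact this.div_const _
  have hmem_abs : ∀ y ∈ Set.Ioo (-r) r, |y| ≤ r := by
    intro y hy
    rw [abs_le]
    exact ⟨hy.1.le, hy.2.le⟩
  have hS : ∀ y ∈ Set.Ioo (-r) r,
      HasDerivAt (fun z => ∑' n, g n z) (∑' n, g' n y) y := by
    intro y hy
    exact hasDerivAt_tsum_of_isPreconnected hu isOpen_Ioo (convex_Ioo _ _).isPreconnected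
      hder (fun n y hy => hg'b n y (hmem_abs y hy)) h0t (hsumg 0 (by simpa using hr0.le)) hy
  have hT : ∀ y : ℝ, |y| ≤ r → Summable (fun n => pA n (-p) * ((n:ℝ) * y^n) / n.factorial) := by
    intro y hy
    apply Summable.of_norm_bounded hu
    intro n
    have h1 : (0:ℝ) < n.factorial := by positivity
    have h2 : |pA n (-p)| ≤ pA n q := pA_abs_le hq0.le hpq n
    have h3 : |y|^n ≤ r^n := pow_le_pow_left₀ (abs_nonneg _) hy n
    have heq : ‖pA n (-p) * ((n:ℝ) * y^n) / n.factorial‖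
        = |pA n (-p)| * ((n:ℝ) * |y|^n) / n.factorial := by
      simp [Real.norm_eq_abs, abs_div, abs_mul, abs_pow, abs_of_pos h1,
        abs_of_nonneg (Nat.cast_nonneg (α := ℝ) n)]
    rw [heq]
    refine le_trans ?_ (hstep n)
    calc |pA n (-p)| * ((n:ℝ) * |y|^n) / n.factorial
        ≤ pA n q * (((n:ℝ)+1)^2 * r^n) / n.factorial := by
          gcongr <;> first
            | exact hq0' n | exact h2 | positivity
            | nlinarith [Nat.cast_nonneg (α := ℝ) n, h3, abs_nonneg y]
    _ = pA n q * ((n:ℝ)+1)^2 * r^n / n.factorial := by ring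
  -- the key ODE identity
  have hkey : ∀ y ∈ Set.Ioo (-r) r,
      (1 - y) * (∑' n, g' n y) = -p * (∑' n, g n y) := by
    intro y hy
    have hyr := hmem_abs y hy
    have hs2 := hsumg' y hyr
    have hsT := hT y hyr
    have hs1 := hsumg y hyr
    have hD1 : (∑' n, g' n y) = ∑' n : ℕ, pA (n+1) (-p) * y^n / n.factorial := by
      rw [hgdef] at *
      rw [hg'def] at *
      rw [Summable.tsum_eq_zero_add hs2]
      simp only [Nat.cast_zero, zero_mul, mul_zero, zero_div, zero_add, Nat.succ_sub_one,
        Nat.factorial_succ, Nat.cast_mul, Nat.cast_add, Nat.cast_one]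
      congr 1
      funext n
      have h1 : (0:ℝ) < n.factorial := by positivity
      have h2 : (0:ℝ) < (n:ℝ) + 1 := by positivity
      field_simp
    have hD2 : (∑' n : ℕ, pA (n+1) (-p) * y^n / n.factorial)
        = (∑' n, pA n (-p) * ((n:ℝ) * y^n) / n.factorial) - p * (∑' n, g n y) := by
      have hterm : ∀ n : ℕ, pA (n+1) (-p) * y^n / n.factorial
          = pA n (-p) * ((n:ℝ) * y^n) / n.factorial - p * (g n y) := by
        intro n
        rw [pA_succ, hgdef]
        have h1 : (0:ℝ) < n.factorial := by positivity
        field_simp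
        ring
      rw [tsum_congr hterm, Summable.tsum_sub hsT (hs1.mul_left p), tsum_mul_left]
    have hyD : y * (∑' n, g' n y) = ∑' n, pA n (-p) * ((n:ℝ) * y^n) / n.factorial := by
      rw [← tsum_mul_left]
      apply tsum_congr
      intro n
      rw [hg'def]
      cases n with
      | zero => simp
      | succ m =>
        simp only [Nat.succ_sub_one]
        have h1 : (0:ℝ) < (m+1).factorial := by positivity
        field_simp
        ring
    have expand : (1 - y) * (∑' n, g' n y) = (∑' n, g' n y) - y * (∑' n, g' n y) := by ring
    rw [expand, hyD, hD1, hD2]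
    ring
  -- φ is constant
  set φ : ℝ → ℝ := fun y => (∑' n, g n y) * (1-y) ^ (-p) with hφdef
  have hIcc_sub : Set.Icc (0:ℝ) x ⊆ Set.Ioo (-r) r := by
    intro y hy
    constructor
    · linarith [hy.1]
    · linarith [hy.2]
  have hφder : ∀ y ∈ Set.Ioo (-r) r, HasDerivAt φ 0 y := by
    intro y hy
    have h1y : (0:ℝ) < 1 - y := by linarith [hy.2]
    have hrpow : HasDerivAt (fun z : ℝ => (1-z) ^ (-p)) (p * (1-y) ^ (-p-1)) y := by
      have hbase : HasDerivAt (fun z : ℝ => 1 - z) (-1) y := by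
        simpa using (hasDerivAt_id y).const_sub 1
      have houter := Real.hasDerivAt_rpow_const (x := 1 - y) (p := -p) (Or.inl h1y.ne')
      have := houter.comp y hbase
      refine this.congr_deriv ?_
      ring
    have hprod := (hS y hy).mul hrpow
    have hr1' : (1-y) ^ (-p) = (1-y) ^ (-p-1) * (1-y) := by
      rw [← Real.rpow_add_one h1y.ne' (-p-1)]
      ring_nf
    have hz : (∑' n, g' n y) * (1-y)^(-p) + (∑' n, g n y) * (p * (1-y)^(-p-1)) = 0 := by
      calc (∑' n, g' n y) * (1-y)^(-p) + (∑' n, g n y) * (p * (1-y)^(-p-1))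
          = ((1-y) * (∑' n, g' n y) + p * (∑' n, g n y)) * (1-y) ^ (-p-1) := by
            rw [hr1']; ring
      _ = 0 := by rw [hkey y hy]; ring
    show HasDerivAt (fun z => (∑' n, g n z) * (1-z)^(-p)) 0 y
    exact hz ▸ hprod
  have hφconst : φ x = φ 0 := by
    refine constant_of_has_deriv_right_zero (f := φ) (a := 0) (b := x) ?_ ?_ x
      (Set.mem_Icc.mpr ⟨hx0, le_refl x⟩)
    · intro y hy
      exact ((hφder y (hIcc_sub hy)).continuousAt).continuousWithinAt
    · intro y hy
      exact ((hφder y (hIcc_sub ⟨hy.1, hy.2.le⟩)).hasDerivWithinAt)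
  have hφ0 : φ 0 = 1 := by
    rw [hφdef]
    simp only
    have hS0 : (∑' n, g n 0) = 1 := by
      rw [tsum_eq_single 0]
      · simp [hgdef, pA_zero]
      · intro n hn
        rcases Nat.exists_eq_succ_of_ne_zero hn with ⟨m, rfl⟩
        simp [hgdef]
    rw [hS0]
    simp
  have hx1' : (0:ℝ) < 1 - x := by linarith
  have hSx : (∑' n, g n x) = (1-x) ^ p := by
    have h := hφconst.trans hφ0
    rw [hφdef] at h
    simp only at h
    have hne : (1-x) ^ (-p) ≠ 0 := (Real.rpow_pos_of_pos hx1' _).ne'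
    have hinv : (1-x) ^ (-p) = ((1-x) ^ p)⁻¹ := by
      rw [Real.rpow_neg hx1'.le]
    have hpne : (1-x) ^ p ≠ 0 := (Real.rpow_pos_of_pos hx1' _).ne'
    rw [hinv] at h
    field_simp at h
    linarith [h]
  have := (hsumg x (by rw [abs_of_nonneg hx0]; exact hxr.le)).hasSum
  rw [hgdef] at hSx
  rw [show (fun n : ℕ => pA n (-p) * x^n / n.factorial) = fun n => g n x from rfl]
  exact (hsumg x (by rw [abs_of_nonneg hx0]; exact hxr.le)).hasSum_iff.mpr hSx

open MeasureTheory Real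

lemma integrableOn_beta {u v : ℝ} (hu : 0 < u) (hv : 0 < v) :
    IntegrableOn (fun t : ℝ => t^(u-1)*(1-t)^(v-1)) (Set.Ioo 0 1) := by
  have hC : IntervalIntegrable
      (fun x : ℝ => (x:ℂ)^((u:ℂ)-1)*(1-(x:ℂ))^((v:ℂ)-1)) volume 0 1 :=
    Complex.betaIntegral_convergent (by simpa using hu) (by simpa using hv)
  have hC' : IntegrableOn
      (fun x : ℝ => (x:ℂ)^((u:ℂ)-1)*(1-(x:ℂ))^((v:ℂ)-1)) (Set.Ioo 0 1) := by
    have := (intervalIntegrable_iff_integrableOn_Ioc_of_le zero_le_one).mp hC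
    exact this.mono_set Set.Ioo_subset_Ioc_self
  have hre : IntegrableOn
      (fun x : ℝ => ((x:ℂ)^((u:ℂ)-1)*(1-(x:ℂ))^((v:ℂ)-1)).re) (Set.Ioo 0 1) := by
    exact hC'.re
  apply IntegrableOn.congr_fun hre _ measurableSet_Ioo
  intro x hx
  have hx0 : (0:ℝ) ≤ x := hx.1.le
  have hx1 : (0:ℝ) ≤ 1 - x := by linarith [hx.2]
  have e : ((x:ℂ)^((u:ℂ)-1)*(1-(x:ℂ))^((v:ℂ)-1)) = ((x^(u-1)*(1-x)^(v-1) : ℝ) : ℂ) := by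
    rw [Complex.ofReal_mul, Complex.ofReal_cpow hx0, Complex.ofReal_cpow hx1]
    push_cast
    ring_nf
  simp only [e, Complex.ofReal_re]

lemma rBeta_eq {u v : ℝ} (hu : 0 < u) (hv : 0 < v) :
    ∫ t in Set.Ioo (0:ℝ) 1, t^(u-1)*(1-t)^(v-1) =
      Real.Gamma u * Real.Gamma v / Real.Gamma (u+v) := by
  have hcx := Complex.Gamma_mul_Gamma_eq_betaIntegral
    (s := (u:ℂ)) (t := (v:ℂ)) (by simpa using hu) (by simpa using hv)
  have hint : Complex.betaIntegral u v = ((∫ t in Set.Ioo (0:ℝ) 1, t^(u-1)*(1-t)^(v-1) : ℝ) : ℂ) := by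
    rw [Complex.betaIntegral]
    have : ∀ x ∈ Set.uIcc (0:ℝ) 1,
        (x:ℂ)^((u:ℂ)-1) * (1-(x:ℂ))^((v:ℂ)-1) = ((x^(u-1)*(1-x)^(v-1) : ℝ) : ℂ) := by
      intro x hx
      rw [Set.uIcc_of_le zero_le_one] at hx
      have hx0 : (0:ℝ) ≤ x := hx.1
      have hx1 : (0:ℝ) ≤ 1 - x := by linarith [hx.2]
      rw [Complex.ofReal_mul, Complex.ofReal_cpow hx0, Complex.ofReal_cpow hx1]
      push_cast
      ring_nf
    rw [intervalIntegral.integral_congr this, intervalIntegral.integral_ofReal]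
    congr 1
    rw [intervalIntegral.integral_of_le zero_le_one, MeasureTheory.integral_Ioc_eq_integral_Ioo]
  rw [hint] at hcx
  have hGuv : Complex.Gamma ((u:ℂ)+(v:ℂ)) = ((Real.Gamma (u+v) : ℝ) : ℂ) := by
    rw [← Complex.ofReal_add, Complex.Gamma_ofReal]
  rw [Complex.Gamma_ofReal, Complex.Gamma_ofReal, hGuv, ← Complex.ofReal_mul,
    ← Complex.ofReal_mul] at hcx
  have := Complex.ofReal_inj.mp hcx
  have hpos : 0 < Real.Gamma (u+v) := Real.Gamma_pos_of_pos (by linarith)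
  field_simp
  linarith [this]

lemma Gamma_add_nat {s : ℝ} (hs : 0 < s) (n : ℕ) :
    Real.Gamma (s + n) = pA n s * Real.Gamma s := by
  induction n with
  | zero => simp [pA]
  | succ n ih =>
    have h1 : s + (n:ℝ) ≠ 0 := by positivity
    have : s + ((n+1 : ℕ):ℝ) = (s + n) + 1 := by push_cast; ring
    rw [this, Real.Gamma_add_one h1, ih]
    have : pA (n+1) s = pA n s * (s + n) := by
      rw [pA, pA, ascPochhammer_succ_right]; simp [Polynomial.eval_mul]
    rw [this]; ring

set_option maxHeartbeats 2000000

theorem hypF_ge_gauss_value (α₁ α₂ : ℝ) (hα₁ : 2 < α₁) (hα₂ : α₂ ∈ Set.Ioo (0 : ℝ) 2) :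
    ∀ h ∈ Set.Ico (0 : ℝ) 1,
      hypF (1 - α₁ / 2) (1 - α₂ / 2) (3 / 2) h ≥
        Real.Gamma (3 / 2) * Real.Gamma ((α₁ + α₂ - 1) / 2) /
          (Real.Gamma ((α₁ + 1) / 2) * Real.Gamma ((α₂ + 1) / 2)) := by
  intro h hh
  obtain ⟨hh0, hh1⟩ := hh
  obtain ⟨hα₂0, hα₂2⟩ := hα₂
  set p : ℝ := α₁/2 - 1 with hpdef
  have hp0 : 0 < p := by rw [hpdef]; linarith
  set b : ℝ := 1 - α₂/2 with hbdef
  have hb0 : 0 < b := by rw [hbdef]; linarith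
  have hb1 : b < 1 := by rw [hbdef]; linarith
  set q : ℝ := (α₂+1)/2 with hqdef
  have hq0 : 0 < q := by rw [hqdef]; linarith
  have hbq : b + q = 3/2 := by rw [hbdef, hqdef]; ring
  have hap : 1 - α₁/2 = -p := by rw [hpdef]; ring
  -- Gamma positivity
  have hΓb : 0 < Real.Gamma b := Real.Gamma_pos_of_pos hb0
  have hΓq : 0 < Real.Gamma q := Real.Gamma_pos_of_pos hq0
  have hΓ32 : 0 < Real.Gamma (3/2) := Real.Gamma_pos_of_pos (by norm_num)
  set K : ℝ := Real.Gamma b * Real.Gamma q / Real.Gamma (3/2) with hKdef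
  have hK0 : 0 < K := by rw [hKdef]; positivity
  -- the family of integrands
  set F : ℕ → ℝ → ℝ := fun n t =>
    (pA n (-p) * h^n / n.factorial) * (t^((b+n)-1) * (1-t)^(q-1)) with hFdef
  set base : ℝ → ℝ := fun t => t^(b-1) * (1-t)^(q-1) with hbasedef
  have hbase_int : IntegrableOn base (Set.Ioo 0 1) := integrableOn_beta hb0 hq0
  have hbn0 : ∀ n : ℕ, (0:ℝ) < b + n := by intro n; positivity
  have hFint : ∀ n : ℕ, IntegrableOn (F n) (Set.Ioo 0 1) := by
    intro n
    exact (integrableOn_beta (hbn0 n) hq0).const_mul _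
  -- value of each integral
  have hpA32 : ∀ n : ℕ, (0:ℝ) < pA n (3/2) := fun n => pA_pos (by norm_num) n
  have hFval : ∀ n : ℕ,
      ∫ t in Set.Ioo (0:ℝ) 1, F n t
        = (pA n (-p) * pA n b / (pA n (3/2) * n.factorial) * h^n) * K := by
    intro n
    rw [hFdef]
    simp only
    rw [MeasureTheory.integral_const_mul, rBeta_eq (hbn0 n) hq0]
    have e1 : Real.Gamma (b + n) = pA n b * Real.Gamma b := Gamma_add_nat hb0 n
    have e2 : Real.Gamma (b + n + q) = pA n (3/2) * Real.Gamma (3/2) := by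
      rw [show b + (n:ℝ) + q = 3/2 + n by rw [← hbq]; ring]
      exact Gamma_add_nat (by norm_num) n
    rw [e1, e2, hKdef]
    have h1 : (0:ℝ) < n.factorial := by positivity
    field_simp
  -- measurability of F n
  have hFmeas : ∀ n : ℕ, AEStronglyMeasurable (F n) (volume.restrict (Set.Ioo 0 1)) := by
    intro n
    apply ContinuousOn.aestronglyMeasurable _ measurableSet_Ioo
    apply ContinuousOn.mul continuousOn_const
    apply ContinuousOn.mul
    · exact ContinuousOn.rpow_const continuousOn_id (fun t ht => Or.inl ht.1.ne')
    · exact ContinuousOn.rpow_const (continuous_const.sub continuous_id).continuousOn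
        (fun t ht => Or.inl (by intro hc; have := ht.2; linarith))
  -- bounding constants
  set Q : ℝ := |p| + 1 with hQdef
  have hQ0 : 0 < Q := by positivity
  have hpQ : |(-p)| ≤ Q := by rw [abs_neg, hQdef]; linarith [le_abs_self p]
  set C : ℕ → ℝ := fun n => pA n Q * h^n / n.factorial with hCdef
  have hC0 : ∀ n, 0 ≤ C n := by
    intro n
    have h1 : (0:ℝ) < n.factorial := by positivity
    have h2 : (0:ℝ) ≤ pA n Q := pA_nonneg hQ0.le n
    rw [hCdef]
    exact div_nonneg (mul_nonneg h2 (pow_nonneg hh0 n)) h1.le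
  have hCsum : Summable C := by
    set r : ℝ := (1+h)/2 with hrdef
    have hr0 : 0 < r := by positivity
    have hr1 : r < 1 := by rw [hrdef]; linarith
    have hhr : h ≤ r := by rw [hrdef]; linarith
    apply Summable.of_nonneg_of_le hC0 _ (summable_master hQ0 hr0 hr1)
    intro n
    rw [hCdef]
    have h1 : (0:ℝ) < n.factorial := by positivity
    have h2 : (0:ℝ) ≤ pA n Q := pA_nonneg hQ0.le n
    calc pA n Q * h^n / n.factorial ≤ pA n Q * r^n / n.factorial := by
          gcongr
    _ = pA n Q * 1 * r^n / n.factorial := by ring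
    _ ≤ pA n Q * ((n:ℝ)+1)^2 * r^n / n.factorial := by
          gcongr <;> first
            | exact mul_nonneg h2 (by norm_num)
            | nlinarith [Nat.cast_nonneg (α := ℝ) n]
  -- pointwise bound of F n on Ioo
  have hFbound : ∀ (n : ℕ), ∀ t ∈ Set.Ioo (0:ℝ) 1, ‖F n t‖ ≤ C n * base t := by
    intro n t ht
    have ht0 : (0:ℝ) < t := ht.1
    have ht1 : t < 1 := ht.2
    have h1t : (0:ℝ) < 1 - t := by linarith
    have hbase0 : 0 ≤ base t := by
      rw [hbasedef]
      positivity
    have hsplit : t^((b+n)-1) = t^(b-1) * t^(n:ℕ) := by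
      rw [← Real.rpow_natCast t n, ← Real.rpow_add ht0]
      congr 1
      ring
    have h1 : (0:ℝ) < n.factorial := by positivity
    have h2 : |pA n (-p)| ≤ pA n Q := pA_abs_le hQ0.le hpQ n
    have htn : t^(n:ℕ) ≤ 1 := pow_le_one₀ ht0.le ht1.le
    rw [hFdef]
    simp only
    rw [Real.norm_eq_abs, abs_mul, abs_div, abs_mul, abs_of_pos h1, abs_pow,
      abs_of_nonneg hh0, hsplit]
    have hrw : t ^ (b - 1) * t ^ n * (1 - t) ^ (q - 1) = (t^(b-1) * (1-t)^(q-1)) * t^n := by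
      ring
    rw [hrw, abs_mul]
    have hb1' : 0 ≤ t^(b-1) * (1-t)^(q-1) := by positivity
    rw [abs_of_nonneg hb1', abs_pow, abs_of_pos ht0]
    calc |pA n (-p)| * h ^ n / ↑n.factorial * (t ^ (b - 1) * (1 - t) ^ (q - 1) * t ^ n)
        ≤ pA n Q * h ^ n / ↑n.factorial * (t ^ (b - 1) * (1 - t) ^ (q - 1) * 1) := by
          gcongr <;> first
            | exact h2 | exact htn
            | exact div_nonneg (mul_nonneg (pA_nonneg hQ0.le n) (pow_nonneg hh0 n)) h1.le
            | positivity
    _ = C n * base t := by rw [hCdef, hbasedef]; ring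
  -- finiteness for integral_tsum
  have hbase_lint : ∫⁻ t in Set.Ioo (0:ℝ) 1, ENNReal.ofReal (base t) < ⊤ := by
    have h1 : ∫⁻ t in Set.Ioo (0:ℝ) 1, (‖base t‖₊ : ENNReal) < ⊤ := hbase_int.2
    refine lt_of_le_of_lt (MeasureTheory.lintegral_mono (fun t => ?_)) h1
    rw [← ENNReal.ofReal_coe_nnreal, coe_nnnorm]
    exact ENNReal.ofReal_le_ofReal (le_abs_self _)
  have hlintsum : ∑' n : ℕ, ∫⁻ t in Set.Ioo (0:ℝ) 1, ‖F n t‖₊ ≠ ⊤ := by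
    have hstep : ∀ n : ℕ, ∫⁻ t in Set.Ioo (0:ℝ) 1, ‖F n t‖₊
        ≤ ENNReal.ofReal (C n) * ∫⁻ t in Set.Ioo (0:ℝ) 1, ENNReal.ofReal (base t) := by
      intro n
      rw [← MeasureTheory.lintegral_const_mul' _ _ ENNReal.ofReal_ne_top]
      apply MeasureTheory.setLIntegral_mono' measurableSet_Ioo
      intro t ht
      rw [← ENNReal.ofReal_coe_nnreal, coe_nnnorm, ← ENNReal.ofReal_mul (hC0 n)]
      exact ENNReal.ofReal_le_ofReal (hFbound n t ht)
    apply ne_top_of_le_ne_top _ (ENNReal.tsum_le_tsum hstep)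
    rw [ENNReal.tsum_mul_right]
    apply ENNReal.mul_ne_top _ hbase_lint.ne
    rw [← ENNReal.ofReal_tsum_of_nonneg hC0 hCsum]
    exact ENNReal.ofReal_ne_top
  -- Fubini
  have hswap : ∫ t in Set.Ioo (0:ℝ) 1, ∑' n : ℕ, F n t
      = ∑' n : ℕ, ∫ t in Set.Ioo (0:ℝ) 1, F n t :=
    MeasureTheory.integral_tsum hFmeas hlintsum
  -- pointwise evaluation of the sum
  have hsum_eval : ∀ t ∈ Set.Ioo (0:ℝ) 1, (∑' n : ℕ, F n t) = base t * (1-h*t)^p := by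
    intro t ht
    have ht0 : (0:ℝ) < t := ht.1
    have ht1 : t < 1 := ht.2
    have hht0 : 0 ≤ h * t := by positivity
    have hht1 : h * t < 1 := by nlinarith
    have hbs := (binom_hasSum (p := p) hht0 hht1).mul_right (base t)
    have heq : ∀ n : ℕ, pA n (-p) * (h*t)^n / n.factorial * base t = F n t := by
      intro n
      rw [hFdef, hbasedef]
      simp only
      have hsplit : t^((b+n)-1) = t^(b-1) * t^(n:ℕ) := by
        rw [← Real.rpow_natCast t n, ← Real.rpow_add ht0]
        congr 1
        ring
      rw [hsplit, mul_pow]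
      ring
    rw [← tsum_congr heq, hbs.tsum_eq]
    rw [hbasedef]
    ring_nf
  -- hypF as integral
  have hhyp : hypF (1 - α₁ / 2) (1 - α₂ / 2) (3 / 2) h
      = (∫ t in Set.Ioo (0:ℝ) 1, ∑' n : ℕ, F n t) / K := by
    rw [hypF, hswap, ← tsum_div_const]
    apply tsum_congr
    intro n
    rw [hFval n, hap, ← hbdef, mul_div_cancel_right₀ _ hK0.ne']
    simp only [pA]
  -- the two integrands
  set G1 : ℝ → ℝ := fun t => base t * (1-h*t)^p with hG1def
  set G2 : ℝ → ℝ := fun t => base t * (1-t)^p with hG2def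
  have hbase_nonneg : ∀ t ∈ Set.Ioo (0:ℝ) 1, 0 ≤ base t := by
    intro t ht
    have ht0 : (0:ℝ) < t := ht.1
    have h1t : (0:ℝ) < 1 - t := by linarith [ht.2]
    rw [hbasedef]
    positivity
  have hG1meas : AEStronglyMeasurable G1 (volume.restrict (Set.Ioo 0 1)) := by
    apply ContinuousOn.aestronglyMeasurable _ measurableSet_Ioo
    apply ContinuousOn.mul
    · apply ContinuousOn.mul
      · exact ContinuousOn.rpow_const continuousOn_id (fun t ht => Or.inl ht.1.ne')
      · exact ContinuousOn.rpow_const (continuous_const.sub continuous_id).continuousOn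
          (fun t ht => Or.inl (by intro hc; have := ht.2; linarith))
    · apply ContinuousOn.rpow_const
        (continuous_const.sub (continuous_const.mul continuous_id)).continuousOn
      intro t ht
      left
      have ht0 : (0:ℝ) < t := ht.1
      have hlt : h * t < 1 := by nlinarith [ht.2, mul_nonneg hh0 (le_of_lt ht.1)]
      intro hc
      simp only [Pi.sub_apply, Pi.mul_apply, id_eq] at hc
      linarith
  have hG1bound : ∀ t ∈ Set.Ioo (0:ℝ) 1, ‖G1 t‖ ≤ base t := by
    intro t ht
    have ht0 : (0:ℝ) < t := ht.1
    have hht1 : h * t ≤ 1 := by nlinarith [mul_le_mul_of_nonneg_left ht.2.le hh0]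
    have hht0 : 0 ≤ 1 - h*t := by linarith
    rw [hG1def]
    simp only
    rw [Real.norm_eq_abs, abs_mul, abs_of_nonneg (hbase_nonneg t ht),
      abs_of_nonneg (Real.rpow_nonneg hht0 p)]
    calc base t * (1-h*t)^p ≤ base t * 1 :=
          mul_le_mul_of_nonneg_left (Real.rpow_le_one hht0 (by nlinarith [mul_nonneg hh0 ht0.le]) hp0.le)
            (hbase_nonneg t ht)
    _ = base t := mul_one _
  have hG1int : IntegrableOn G1 (Set.Ioo 0 1) := by
    apply MeasureTheory.Integrable.mono' hbase_int hG1meas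
    rw [MeasureTheory.ae_restrict_iff' measurableSet_Ioo]
    exact MeasureTheory.ae_of_all _ hG1bound
  have hG2eq : ∀ t ∈ Set.Ioo (0:ℝ) 1, G2 t = t^(b-1) * (1-t)^((q+p)-1) := by
    intro t ht
    have h1t : (0:ℝ) < 1 - t := by linarith [ht.2]
    rw [hG2def, hbasedef]
    simp only
    rw [show (q+p)-1 = (q-1) + p by ring, Real.rpow_add h1t]
    ring
  have hG2int : IntegrableOn G2 (Set.Ioo 0 1) := by
    apply (integrableOn_beta hb0 (by positivity : (0:ℝ) < q + p)).congr_fun _ measurableSet_Ioo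
    intro t ht
    exact (hG2eq t ht).symm
  have hmono : ∫ t in Set.Ioo (0:ℝ) 1, G2 t ≤ ∫ t in Set.Ioo (0:ℝ) 1, G1 t := by
    apply MeasureTheory.setIntegral_mono_on hG2int hG1int measurableSet_Ioo
    intro t ht
    have ht0 : (0:ℝ) < t := ht.1
    have h1t : (0:ℝ) < 1 - t := by linarith [ht.2]
    have hle : 1 - t ≤ 1 - h*t := by nlinarith
    rw [hG1def, hG2def]
    simp only
    exact mul_le_mul_of_nonneg_left (Real.rpow_le_rpow h1t.le hle hp0.le)
      (hbase_nonneg t ht)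
  have hG2val : ∫ t in Set.Ioo (0:ℝ) 1, G2 t
      = Real.Gamma b * Real.Gamma (q+p) / Real.Gamma (b+(q+p)) := by
    rw [MeasureTheory.setIntegral_congr_fun measurableSet_Ioo hG2eq]
    exact rBeta_eq hb0 (by positivity)
  -- final assembly
  have heval : ∫ t in Set.Ioo (0:ℝ) 1, ∑' n : ℕ, F n t = ∫ t in Set.Ioo (0:ℝ) 1, G1 t := by
    apply MeasureTheory.setIntegral_congr_fun measurableSet_Ioo
    intro t ht
    exact hsum_eval t ht
  rw [ge_iff_le, hhyp, heval]
  have hRHS : Real.Gamma (3 / 2) * Real.Gamma ((α₁ + α₂ - 1) / 2) /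
      (Real.Gamma ((α₁ + 1) / 2) * Real.Gamma ((α₂ + 1) / 2))
      = (∫ t in Set.Ioo (0:ℝ) 1, G2 t) / K := by
    rw [hG2val, hKdef]
    have e1 : (α₁ + α₂ - 1)/2 = q + p := by rw [hqdef, hpdef]; ring
    have e2 : (α₁ + 1)/2 = b + (q + p) := by rw [hbdef, hqdef, hpdef]; ring
    have e3 : (α₂ + 1)/2 = q := by rw [hqdef]
    rw [e1, e2, e3]
    have hΓbqp : 0 < Real.Gamma (b + (q+p)) := Real.Gamma_pos_of_pos (by positivity)
    field_simp
  rw [hRHS]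
  gcongr
end
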